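/- arXiv:1212.0766 — 2 statements merged into one kernel-verified Lean document; each statement's English description precedes it below -/
import Mathlib

section
/- Let n ≥ 1, 2 ≤ p < ∞ and let N > n be real. There is a constant C > 0 such that for all j, j' ∈ ℤ with j ≤ j' + 1, all k ∈ ℤ^n, and all families (u^{ε'}_{k'})_{ε'∈E_n, k'∈ℤ^n} and (v^{ε''}_{k''})_{ε''∈E_n, k''∈ℤ^n} of nonnegative real numbers: Σ_{ε'∈E_n} Σ_{k'∈ℤ^n} Σ_{ε''∈E_n} Σ_{k''∈ℤ^n} u^{ε'}_{k'} v^{ε''}_{k''} (1+|2^{j−j'}k'−k|)^{−8N} (1+|k'−k''|)^{−8N} ≤ C Σ_{w∈ℤ^n} Σ_{w'∈ℤ^n} (1+|w|)^{−N} (1+|w−w'|)^{−N} 2^{n(j'−j)(1−2/p)} ( Σ_{ε'∈E_n} Σ_{k' : Q_{j',k'} ⊆ Q^w_{j,k}} (u^{ε'}_{k'})^p )^{1/p} ( Σ_{ε''∈E_n} Σ_{k'' : Q_{j',k''} ⊆ Q^{w'}_{j,k}} (v^{ε''}_{k''})^p )^{1/p}, both sides interpreted in [0,∞]. -/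
noncomputable section

open MeasureTheory Real Complex
open scoped ENNReal NNReal

/-- `ℝⁿ` modeled as functions `Fin n → ℝ`. -/
abbrev Vec (n : ℕ) : Type := Fin n → ℝ

/-- Integer lattice `ℤⁿ`. -/
abbrev IVec (n : ℕ) : Type := Fin n → ℤ

/-- The index set `E_n = {0,1}ⁿ \ {0}`, with `{0,1}ⁿ` modeled as `Fin n → Bool`. -/
abbrev En (n : ℕ) : Type := {ε : Fin n → Bool // ε ≠ fun _ => false}

/-- The Euclidean norm on `Vec n`. -/
def enorm2 {n : ℕ} (x : Vec n) : ℝ := Real.sqrt (∑ i, (x i) ^ 2)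

/-- The dyadic cube `Q_{j,k} = {x : 2^j x − k ∈ [0,1)ⁿ}` of side length `2^{−j}`. -/
def dyadicCube (n : ℕ) (j : ℤ) (k : IVec n) : Set (Vec n) :=
  {x | ∀ i, (k i : ℝ) ≤ (2:ℝ) ^ j * x i ∧ (2:ℝ) ^ j * x i < (k i : ℝ) + 1}

/-- `Q^w_{j,k} = 2^{8−j} w + tilde-Q_{j,k}`, where `tilde-Q_{j,k}` is the unique dyadic
cube of side length `2^{8−j}` containing `Q_{j,k}` (its index is `⌊k/2^8⌋`). -/
def QW (n : ℕ) (j : ℤ) (k w : IVec n) : Set (Vec n) :=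
  dyadicCube n (j - 8) (fun i => Int.fdiv (k i) 256 + w i)

namespace St10


lemma enorm2_nonneg {n : ℕ} (x : Vec n) : 0 ≤ enorm2 x := Real.sqrt_nonneg _

lemma enorm2_eq {n : ℕ} (x : Vec n) : enorm2 x = ‖(WithLp.toLp 2 x : EuclideanSpace ℝ (Fin n))‖ := by
  rw [EuclideanSpace.norm_eq]
  simp [enorm2, Real.norm_eq_abs, sq_abs]

lemma abs_le_enorm2 {n : ℕ} (x : Vec n) (i : Fin n) : |x i| ≤ enorm2 x := by
  rw [enorm2, ← Real.sqrt_sq_eq_abs]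
  exact Real.sqrt_le_sqrt (Finset.single_le_sum (f := fun i => (x i)^2)
    (fun i _ => sq_nonneg _) (Finset.mem_univ i))

lemma enorm2_le_of_abs_le {n : ℕ} {x : Vec n} {T : ℝ} (hT : 0 ≤ T) (h : ∀ i, |x i| ≤ T) :
    enorm2 x ≤ T * Real.sqrt n := by
  rw [enorm2]
  have h1 : ∑ i, (x i)^2 ≤ ∑ _i : Fin n, T^2 :=
    Finset.sum_le_sum fun i _ => by
      rw [← _root_.sq_abs (x i)]; exact pow_le_pow_left₀ (abs_nonneg _) (h i) 2
  calc Real.sqrt (∑ i, (x i)^2) ≤ Real.sqrt ((n : ℝ) * T^2) := by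
        refine Real.sqrt_le_sqrt ?_
        simpa [Finset.sum_const, nsmul_eq_mul] using h1
    _ = T * Real.sqrt n := by
        rw [Real.sqrt_mul (Nat.cast_nonneg n), Real.sqrt_sq hT, mul_comm]

lemma key_weight {n : ℕ} (hn : 1 ≤ n) {T : ℝ} (hT : 2 ≤ T) (w x ρ : Vec n)
    (hx : ∀ i, x i = T * w i + ρ i) (hρ : ∀ i, |ρ i| ≤ T) :
    1 + enorm2 w ≤ (1 + 2 * Real.sqrt n) * (1 + enorm2 x) := by
  have hT0 : (0:ℝ) ≤ T := by linarith
  have hρn : enorm2 ρ ≤ T * Real.sqrt n := enorm2_le_of_abs_le hT0 hρ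
  have hsn : (1:ℝ) ≤ Real.sqrt n := by
    rw [show (1:ℝ) = Real.sqrt 1 by simp]
    exact Real.sqrt_le_sqrt (by exact_mod_cast hn)
  rcases le_or_gt (enorm2 w) (2 * Real.sqrt n) with hw | hw
  · nlinarith [enorm2_nonneg x, Real.sqrt_nonneg (n:ℝ)]
  · have hX : (WithLp.toLp 2 x : EuclideanSpace ℝ (Fin n))
        = T • (WithLp.toLp 2 w : EuclideanSpace ℝ (Fin n)) + (WithLp.toLp 2 ρ : EuclideanSpace ℝ (Fin n)) := by
      ext i; simp [hx i]
    have h1 : T * enorm2 w - enorm2 ρ ≤ enorm2 x := by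
      rw [enorm2_eq x, enorm2_eq w, enorm2_eq ρ, hX]
      have h2 : ‖T • (WithLp.toLp 2 w : EuclideanSpace ℝ (Fin n))‖
          ≤ ‖T • (WithLp.toLp 2 w : EuclideanSpace ℝ (Fin n)) + (WithLp.toLp 2 ρ : EuclideanSpace ℝ (Fin n))‖
            + ‖(WithLp.toLp 2 ρ : EuclideanSpace ℝ (Fin n))‖ := by
        calc ‖T • (WithLp.toLp 2 w : EuclideanSpace ℝ (Fin n))‖
            = ‖(T • (WithLp.toLp 2 w : EuclideanSpace ℝ (Fin n)) + (WithLp.toLp 2 ρ : EuclideanSpace ℝ (Fin n)))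
                + -(WithLp.toLp 2 ρ : EuclideanSpace ℝ (Fin n))‖ := by rw [add_neg_cancel_right]
          _ ≤ _ := by
              refine le_trans (norm_add_le _ _) ?_
              rw [norm_neg]
      rw [norm_smul, Real.norm_eq_abs, _root_.abs_of_nonneg hT0] at h2
      linarith
    nlinarith [h1, hρn,
      mul_nonneg (by linarith : (0:ℝ) ≤ T - 1) (by linarith : (0:ℝ) ≤ enorm2 w - 2*Real.sqrt n),
      mul_nonneg (by linarith : (0:ℝ) ≤ T - 2) (Real.sqrt_nonneg (n:ℝ)),
      mul_nonneg (by positivity : (0:ℝ) ≤ 2*Real.sqrt n) (enorm2_nonneg x),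
      Real.sqrt_nonneg (n:ℝ), enorm2_nonneg w, enorm2_nonneg x]


lemma summable_1d : Summable (fun t : ℤ => ((1+|(t:ℝ)|)⁻¹) ^ 2) := by
  have h : Summable (fun n : ℕ => ((1+(n:ℝ))⁻¹) ^ 2) := by
    have h0 : Summable (fun n : ℕ => 1/((n:ℝ))^2) := summable_one_div_nat_pow.2 one_lt_two
    have := (summable_nat_add_iff (f := fun n : ℕ => 1/((n:ℝ))^2) 1).2 h0
    refine this.congr fun n => ?_
    push_cast
    rw [one_div, ← inv_pow]
    ring_nf
  refine Summable.of_nat_of_neg (h.congr fun n => ?_) (h.congr fun n => ?_) <;>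
    simp [abs_of_nonneg, Nat.cast_nonneg]

lemma rpow_neg_le {a b c s : ℝ} (ha : 1 ≤ a) (hb : 1 ≤ b) (hc : 0 < c) (h : a ≤ c * b)
    (hs : 0 ≤ s) : b ^ (-s) ≤ c ^ s * a ^ (-s) := by
  have hb0 : (0:ℝ) < b := by linarith
  have ha0 : (0:ℝ) < a := by linarith
  have h1 : a ^ s ≤ c ^ s * b ^ s := by
    rw [← Real.mul_rpow hc.le hb0.le]
    exact Real.rpow_le_rpow ha0.le h hs
  have hbs : (0:ℝ) < b ^ s := Real.rpow_pos_of_pos hb0 s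
  have has : (0:ℝ) < a ^ s := Real.rpow_pos_of_pos ha0 s
  have hcs : (0:ℝ) < c ^ s := Real.rpow_pos_of_pos hc s
  rw [Real.rpow_neg ha0.le, Real.rpow_neg hb0.le]
  rw [inv_le_iff_one_le_mul₀ hbs]
  calc (1:ℝ) = a ^ s * (a ^ s)⁻¹ := by field_simp
    _ ≤ (c ^ s * b ^ s) * (a ^ s)⁻¹ := by
        apply mul_le_mul_of_nonneg_right h1 (by positivity)
    _ = c ^ s * (a ^ s)⁻¹ * b ^ s := by ring

lemma rpow_exp_mono {b s t : ℝ} (hb : 1 ≤ b) (h : s ≤ t) : b ^ (-t) ≤ b ^ (-s) :=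
  Real.rpow_le_rpow_of_exponent_le hb (by linarith)

lemma tsum_pi_prod (n : ℕ) (g : ℤ → ℝ≥0∞) :
    ∑' m : IVec n, ∏ i, g (m i) = (∑' t : ℤ, g t) ^ n := by
  induction n with
  | zero =>
    simp only [Finset.univ_eq_empty, Finset.prod_empty, pow_zero]
    exact tsum_eq_single (fun i => i.elim0) (fun b hb => absurd (Subsingleton.elim b _) hb)
  | succ n ih =>
    rw [← (Fin.consEquiv (fun _ : Fin (n+1) => ℤ)).tsum_eq (fun m : IVec (n+1) => ∏ i, g (m i)),
      ENNReal.tsum_prod']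
    have : ∀ (t : ℤ) (m : IVec n),
        (∏ i, g (((Fin.consEquiv (fun _ : Fin (n+1) => ℤ)) (t, m)) i)) = g t * ∏ i, g (m i) := by
      intro t m
      rw [Fin.prod_univ_succ]
      simp [Fin.consEquiv]
    simp_rw [this]
    rw [pow_succ]
    simp_rw [ENNReal.tsum_mul_left, ENNReal.tsum_mul_right]
    rw [ih, mul_comm]

lemma kernel_lt_top (n : ℕ) {s : ℝ} (hs : 2*n ≤ s) :
    ∃ K : ℝ≥0∞, K ≠ ∞ ∧ ∀ y : IVec n,
      (∑' m : IVec n, ENNReal.ofReal ((1 + enorm2 (fun i => ((y i : ℝ) - (m i : ℝ)))) ^ (-s))) ≤ K := by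
  have hsnn : 0 ≤ s := le_trans (by positivity) hs
  refine ⟨(∑' t : ℤ, ENNReal.ofReal (((1+|(t:ℝ)|)⁻¹)^2)) ^ n, ?_, ?_⟩
  · rw [← ENNReal.ofReal_tsum_of_nonneg (fun t => by positivity) summable_1d]
    exact ENNReal.pow_ne_top ENNReal.ofReal_ne_top
  · intro y
    have htrans : (∑' m : IVec n, ENNReal.ofReal ((1 + enorm2 (fun i => ((y i:ℝ) - m i))) ^ (-s)))
        = ∑' m : IVec n, ENNReal.ofReal ((1 + enorm2 (fun i => (m i:ℝ))) ^ (-s)) := by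
      rw [← (Equiv.subLeft y).tsum_eq
        (fun m : IVec n => ENNReal.ofReal ((1 + enorm2 (fun i => (m i : ℝ))) ^ (-s)))]
      apply tsum_congr; intro m
      have he : (fun i => (((Equiv.subLeft y) m) i : ℝ)) = fun i => (y i : ℝ) - (m i : ℝ) := by
        funext i; simp [Equiv.subLeft]
      rw [he]
    rw [htrans]
    refine le_of_le_of_eq (ENNReal.tsum_le_tsum fun m => ?_) (tsum_pi_prod n _)
    rw [← ENNReal.ofReal_prod_of_nonneg (fun i _ => by positivity)]
    apply ENNReal.ofReal_le_ofReal
    set b : ℝ := 1 + enorm2 (fun i => (m i:ℝ)) with hbdef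
    have hb : (1:ℝ) ≤ b := by
      have := enorm2_nonneg (fun i => (m i:ℝ)); simp [hbdef]; linarith
    have hb0 : (0:ℝ) < b := by linarith
    calc b ^ (-s) ≤ b ^ (-((2*n : ℕ) : ℝ)) := by
          apply rpow_exp_mono hb; push_cast; linarith
      _ = (b ^ (2*n : ℕ))⁻¹ := by
          rw [Real.rpow_neg hb0.le, Real.rpow_natCast]
      _ ≤ (∏ i, (1+|(m i : ℝ)|)^2)⁻¹ := by
          apply inv_anti₀
          · positivity
          · calc ∏ i, (1+|(m i : ℝ)|)^2 ≤ ∏ _i : Fin n, b^2 := by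
                  apply Finset.prod_le_prod (fun i _ => by positivity)
                  intro i _
                  have h1 : |(m i : ℝ)| ≤ enorm2 (fun i => (m i:ℝ)) :=
                    abs_le_enorm2 (fun i => (m i:ℝ)) i
                  have h2 : (1+|(m i : ℝ)|) ≤ b := by rw [hbdef]; linarith
                  exact pow_le_pow_left₀ (by positivity) h2 2
            _ = b ^ (2*n : ℕ) := by
                  rw [Finset.prod_const, Finset.card_univ, Fintype.card_fin, ← pow_mul, mul_comm 2 n]
      _ = ∏ i, ((1+|(m i : ℝ)|)⁻¹)^2 := by
          rw [← Finset.prod_inv_distrib]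
          apply Finset.prod_congr rfl
          intro i _
          rw [inv_pow]


lemma fdiv_le {a b : ℤ} (hb : 0 < b) : b * (a.fdiv b) ≤ a ∧ a < b * (a.fdiv b) + b := by
  have h1 := Int.fmod_add_mul_fdiv a b
  have h2 := Int.fmod_nonneg_of_pos a hb
  have h3 := Int.fmod_lt_of_pos a hb
  constructor <;> linarith

/-- The basepoint of a dyadic cube belongs to it. -/
lemma basept_mem {n : ℕ} (j' : ℤ) (k' : IVec n) :
    (fun i => (k' i : ℝ) * (2:ℝ) ^ (-j')) ∈ dyadicCube n j' k' := by
  intro i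
  have h2 : (2:ℝ) ^ j' * ((k' i : ℝ) * (2:ℝ) ^ (-j')) = (k' i : ℝ) := by
    rw [mul_comm ((k' i : ℝ)) _, ← mul_assoc, ← zpow_add₀ (two_ne_zero), add_neg_cancel,
      zpow_zero, one_mul]
  rw [h2]
  exact ⟨le_refl _, by linarith⟩

/-- Two dyadic cubes of the same generation containing a common point coincide. -/
lemma cube_unique {n : ℕ} {J : ℤ} {m m' : IVec n} {x : Vec n}
    (h : x ∈ dyadicCube n J m) (h' : x ∈ dyadicCube n J m') : m = m' := by
  funext i
  have h1 := h i; have h2 := h' i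
  have e1 : ⌊(2:ℝ) ^ J * x i⌋ = m i := Int.floor_eq_iff.mpr ⟨h1.1, h1.2⟩
  have e2 : ⌊(2:ℝ) ^ J * x i⌋ = m' i := Int.floor_eq_iff.mpr ⟨h2.1, h2.2⟩
  rw [← e1, e2]

/-- Finer dyadic cubes are contained in coarser ones with the `fdiv` index. -/
lemma cube_subset {n : ℕ} {J J' : ℤ} (h : J ≤ J') (k' : IVec n) :
    dyadicCube n J' k' ⊆ dyadicCube n J (fun i => (k' i).fdiv (2 ^ (J' - J).toNat)) := by
  intro x hx i
  set e : ℕ := (J' - J).toNat with he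
  set D : ℤ := 2 ^ e with hD
  have hD0 : (0:ℤ) < D := by positivity
  have hDr : (D : ℝ) = (2:ℝ) ^ (J' - J) := by
    rw [hD]
    push_cast
    rw [← zpow_natCast (2:ℝ) e, he, Int.toNat_of_nonneg (by linarith)]
  have hDrpos : (0:ℝ) < (D:ℝ) := by exact_mod_cast hD0
  set q : ℤ := (k' i).fdiv D with hq
  obtain ⟨hb1, hb2⟩ := fdiv_le (a := k' i) (b := D) hD0
  have hx1 := (hx i).1; have hx2 := (hx i).2
  have key : (2:ℝ) ^ J * x i = ((2:ℝ) ^ J' * x i) / (D:ℝ) := by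
    rw [hDr, eq_div_iff (by positivity), mul_comm ((2:ℝ) ^ J) (x i), mul_assoc,
      ← zpow_add₀ (two_ne_zero : (2:ℝ) ≠ 0) J (J' - J)]
    ring_nf
  constructor
  · rw [key, le_div_iff₀ hDrpos]
    calc (q:ℝ) * D = ((q * D : ℤ) : ℝ) := by push_cast; ring
      _ ≤ ((k' i : ℤ) : ℝ) := by exact_mod_cast (by linarith : q * D ≤ k' i)
      _ ≤ _ := hx1
  · rw [key, div_lt_iff₀ hDrpos]
    calc (2:ℝ) ^ J' * x i < (k' i : ℝ) + 1 := hx2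
      _ ≤ ((q:ℝ) + 1) * D := by
          have : k' i + 1 ≤ (q + 1) * D := by linarith [hb2]
          calc ((k' i : ℝ) + 1) = (((k' i + 1 : ℤ)) : ℝ) := by push_cast; ring
            _ ≤ (((q+1) * D : ℤ) : ℝ) := by exact_mod_cast this
            _ = ((q:ℝ) + 1) * D := by push_cast; ring

/-- Characterization of when a `j'`-cube lies in `QW n j k w`. -/
lemma subset_QW_iff {n : ℕ} {j j' : ℤ} (hjj' : j ≤ j' + 1) (k k' w : IVec n) :
    dyadicCube n j' k' ⊆ QW n j k w ↔
      ∀ i, (k' i).fdiv (2 ^ (j' - (j - 8)).toNat) = (k i).fdiv 256 + w i := by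
  have hJ : j - 8 ≤ j' := by linarith
  constructor
  · intro hsub
    have hmem := basept_mem j' k'
    have h1 : (fun i => (k' i : ℝ) * (2:ℝ) ^ (-j')) ∈ QW n j k w := hsub hmem
    have h2 := cube_subset hJ k' hmem
    have := cube_unique h2 h1
    intro i
    exact congrFun this i
  · intro hw
    intro x hx
    have h2 := cube_subset hJ k' hx
    have heq : (fun i => (k' i).fdiv (2 ^ (j' - (j - 8)).toNat)) =
        (fun i => (k i).fdiv 256 + w i) := funext hw
    rw [QW, ← heq]
    exact h2


lemma tsum_holder {ι : Type*} [Countable ι] (f g : ι → ℝ≥0∞) {p q : ℝ}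
    (hpq : p.HolderConjugate q) :
    ∑' i, f i * g i ≤ (∑' i, f i ^ p) ^ (1/p) * (∑' i, g i ^ q) ^ (1/q) := by
  letI : MeasurableSpace ι := ⊤
  haveI : MeasurableSingletonClass ι := ⟨fun _ => trivial⟩
  rw [← lintegral_count, ← lintegral_count, ← lintegral_count]
  exact ENNReal.lintegral_mul_le_Lp_mul_Lq _ hpq measurable_from_top.aemeasurable
    measurable_from_top.aemeasurable

lemma tsum_cauchy_schwarz {ι : Type*} [Countable ι] (f g : ι → ℝ≥0∞) :
    ∑' i, f i * g i ≤ (∑' i, f i ^ (2:ℝ)) ^ (1/2 : ℝ) * (∑' i, g i ^ (2:ℝ)) ^ (1/2 : ℝ) := by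
  have h22 : (2:ℝ).HolderConjugate 2 := Real.HolderConjugate.two_two
  exact tsum_holder f g h22

lemma tsum_sq_le {ι : Type*} [Countable ι] (u : ι → ℝ≥0∞) {p : ℝ} (hp : 2 ≤ p) :
    ∑' i, u i ^ (2:ℝ) ≤ (∑' i, u i ^ p) ^ (2/p) * (∑' _i : ι, (1:ℝ≥0∞)) ^ (1 - 2/p) := by
  rcases eq_or_lt_of_le hp with heq | hlt
  · rw [← heq]
    norm_num
  · have hp0 : p ≠ 0 := by linarith
    have hr : (1:ℝ) < p / 2 := by linarith
    have hconj := Real.HolderConjugate.conjExponent hr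
    have e1 : (2:ℝ) * (p/2) = p := by field_simp
    have e2 : 1/(p/2) = 2/p := by rw [one_div_div]
    have e3 : 1/(Real.conjExponent (p/2)) = 1 - 2/p := by
      rw [Real.conjExponent, one_div_div]
      field_simp
    calc ∑' i, u i ^ (2:ℝ) = ∑' i, (u i ^ (2:ℝ)) * 1 := by simp
      _ ≤ (∑' i, (u i ^ (2:ℝ)) ^ (p/2)) ^ (1/(p/2))
          * (∑' i, (1:ℝ≥0∞) ^ (Real.conjExponent (p/2))) ^ (1/(Real.conjExponent (p/2))) :=
        tsum_holder _ _ hconj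
      _ = (∑' i, u i ^ p) ^ (2/p) * (∑' _i : ι, (1:ℝ≥0∞)) ^ (1 - 2/p) := by
        simp_rw [← ENNReal.rpow_mul, ENNReal.one_rpow, e1, e2, e3]

lemma enorm2_sub_comm {n : ℕ} (x y : Fin n → ℝ) :
    enorm2 (fun i => x i - y i) = enorm2 (fun i => y i - x i) := by
  unfold enorm2
  congr 1
  apply Finset.sum_congr rfl
  intro i _
  ring

lemma tsum_En_le {n : ℕ} (c : ℝ≥0∞) : ∑' _ε : En n, c ≤ (2:ℝ≥0∞)^n * c := by
  calc ∑' _ε : En n, c ≤ ∑' _ε : (Fin n → Bool), c :=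
        ENNReal.tsum_comp_le_tsum_of_injective Subtype.val_injective (fun _ => c)
    _ = (Fintype.card (Fin n → Bool)) * c := by
        rw [tsum_fintype]
        simp [Finset.sum_const, nsmul_eq_mul]
    _ = (2:ℝ≥0∞)^n * c := by
        congr 1
        simp [Fintype.card_fun]

/-- `D := 2 ^ (j' - (j-8)).toNat` is at least 2. -/
lemma two_le_D {j j' : ℤ} (hjj' : j ≤ j' + 1) : (2:ℤ) ≤ 2 ^ (j' - (j - 8)).toNat := by
  have h1 : 1 ≤ (j' - (j - 8)).toNat := by omega
  calc (2:ℤ) = 2^1 := by norm_num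
    _ ≤ 2 ^ (j' - (j - 8)).toNat := pow_le_pow_right₀ (by norm_num) h1

lemma Dcast {j j' : ℤ} (hjj' : j ≤ j' + 1) :
    (2:ℝ) ^ (j - j') * (((2:ℤ) ^ (j' - (j - 8)).toNat : ℤ) : ℝ) = 256 := by
  have hnn : (0:ℤ) ≤ j' - (j - 8) := by omega
  have h1 : (((2:ℤ) ^ (j' - (j - 8)).toNat : ℤ) : ℝ) = (2:ℝ) ^ ((j' - (j-8) : ℤ)) := by
    push_cast
    rw [← zpow_natCast (2:ℝ) (j' - (j - 8)).toNat, Int.toNat_of_nonneg hnn]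
  rw [h1, ← zpow_add₀ (two_ne_zero : (2:ℝ) ≠ 0)]
  have : j - j' + (j' - (j - 8)) = 8 := by ring
  rw [this]
  norm_num

lemma rho_bound {n : ℕ} {j j' : ℤ} (hjj' : j ≤ j' + 1) {k k' w : IVec n}
    (hsub : dyadicCube n j' k' ⊆ QW n j k w) (i : Fin n) :
    |(2:ℝ) ^ (j - j') * (k' i : ℝ) - (k i : ℝ) - 256 * (w i : ℝ)| ≤ 256 := by
  set D : ℤ := 2 ^ (j' - (j - 8)).toNat with hD
  have hD0 : (0:ℤ) < D := by positivity
  have hq := (subset_QW_iff hjj' k k' w).mp hsub i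
  obtain ⟨h1, h2⟩ := fdiv_le (a := k' i) hD0
  obtain ⟨h3, h4⟩ := fdiv_le (a := k i) (by norm_num : (0:ℤ) < 256)
  set q : ℤ := (k' i).fdiv D with hqd
  set c : ℤ := (k i).fdiv 256 with hcd
  have ht0 : (0:ℝ) < (2:ℝ) ^ (j - j') := by positivity
  have htD : (2:ℝ) ^ (j - j') * (D:ℝ) = 256 := Dcast hjj'
  have hb1 : (256:ℝ) * (q:ℝ) ≤ (2:ℝ) ^ (j - j') * (k' i : ℝ) := by
    calc (256:ℝ) * q = ((2:ℝ) ^ (j - j') * (D:ℝ)) * q := by rw [htD]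
      _ = (2:ℝ) ^ (j - j') * ((D:ℝ) * q) := by ring
      _ ≤ (2:ℝ) ^ (j - j') * (k' i : ℝ) := by
          apply mul_le_mul_of_nonneg_left _ ht0.le
          exact_mod_cast h1
  have hb2 : (2:ℝ) ^ (j - j') * (k' i : ℝ) < 256 * (q:ℝ) + 256 := by
    calc (2:ℝ) ^ (j - j') * (k' i : ℝ) < (2:ℝ) ^ (j - j') * ((D:ℝ) * q + D) := by
          apply mul_lt_mul_of_pos_left _ ht0
          exact_mod_cast h2
      _ = ((2:ℝ) ^ (j - j') * (D:ℝ)) * q + ((2:ℝ) ^ (j - j') * (D:ℝ)) := by ring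
      _ = 256 * (q:ℝ) + 256 := by rw [htD]
  have hqr : (q:ℝ) = (c:ℝ) + (w i : ℝ) := by exact_mod_cast hq
  have h3r : (256:ℝ) * (c:ℝ) ≤ (k i : ℝ) := by exact_mod_cast h3
  have h4r : (k i : ℝ) < 256 * (c:ℝ) + 256 := by exact_mod_cast h4
  rw [abs_le]
  constructor <;> nlinarith [hb1, hb2, hqr, h3r, h4r]

lemma sigma_bound {n : ℕ} {j j' : ℤ} (hjj' : j ≤ j' + 1) {k k' k'' w w' : IVec n}
    (hs1 : dyadicCube n j' k' ⊆ QW n j k w) (hs2 : dyadicCube n j' k'' ⊆ QW n j k w')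
    (i : Fin n) :
    |((k' i : ℝ) - (k'' i : ℝ)) - ((2 ^ (j' - (j - 8)).toNat : ℤ) : ℝ) * ((w i : ℝ) - (w' i : ℝ))|
      ≤ ((2 ^ (j' - (j - 8)).toNat : ℤ) : ℝ) := by
  set D : ℤ := 2 ^ (j' - (j - 8)).toNat with hD
  have hD0 : (0:ℤ) < D := by positivity
  have hq1 := (subset_QW_iff hjj' k k' w).mp hs1 i
  have hq2 := (subset_QW_iff hjj' k k'' w').mp hs2 i
  obtain ⟨h1, h2⟩ := fdiv_le (a := k' i) hD0
  obtain ⟨h3, h4⟩ := fdiv_le (a := k'' i) hD0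
  have key : |(k' i - k'' i) - D * (w i - w' i)| ≤ D := by
    rw [abs_le]
    have e1 : D * ((k' i).fdiv D) = D * ((k i).fdiv 256) + D * (w i) := by rw [hq1]; ring
    have e2 : D * ((k'' i).fdiv D) = D * ((k i).fdiv 256) + D * (w' i) := by rw [hq2]; ring
    constructor <;> nlinarith [h1, h2, h3, h4, e1, e2]
  exact_mod_cast key

lemma count_le {n : ℕ} {j j' : ℤ} (hjj' : j ≤ j' + 1) (k w : IVec n) :
    ∑' _k' : {k' : IVec n // dyadicCube n j' k' ⊆ QW n j k w}, (1:ℝ≥0∞)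
      ≤ ENNReal.ofReal ((2:ℝ) ^ ((((j':ℝ) - (j:ℝ)) + 8) * n)) := by
  set d' : ℕ := (j' - (j - 8)).toNat with hd'
  have hd'' : ((d':ℕ) : ℝ) = (j':ℝ) - (j:ℝ) + 8 := by
    have hnn : (0:ℤ) ≤ j' - (j - 8) := by omega
    rw [hd']
    rw [show ((((j' - (j - 8)).toNat : ℕ)) : ℝ) = (((j' - (j - 8)).toNat : ℤ) : ℝ) by push_cast; ring,
      Int.toNat_of_nonneg hnn]
    push_cast; ring
  have hval : (((2 ^ d') ^ n : ℕ) : ℝ≥0∞) = ENNReal.ofReal ((2:ℝ) ^ ((((j':ℝ) - (j:ℝ)) + 8) * n)) := by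
    rw [← hd'']
    rw [show ((d':ℝ) * n) = (((d' * n : ℕ) : ℝ)) by push_cast; ring, Real.rpow_natCast]
    rw [show ((2:ℝ) ^ (d' * n : ℕ)) = (((2 ^ (d' * n) : ℕ) : ℝ)) by push_cast; ring]
    rw [ENNReal.ofReal_natCast]
    congr 1
    rw [pow_mul]
  rw [← hval]
  set Dz : ℤ := 2 ^ d' with hDz
  have hD0 : (0:ℤ) < Dz := by positivity
  have hDcast : Dz = ((2 ^ d' : ℕ) : ℤ) := by rw [hDz]; push_cast; ring
  have hbnd : ∀ (k' : {k' : IVec n // dyadicCube n j' k' ⊆ QW n j k w}) (i : Fin n),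
      0 ≤ (k' : IVec n) i - ((k i).fdiv 256 + w i) * Dz ∧
        (k' : IVec n) i - ((k i).fdiv 256 + w i) * Dz < Dz := by
    intro k' i
    have hch := (subset_QW_iff hjj' k (k' : IVec n) w).mp k'.2 i
    obtain ⟨h1, h2⟩ := fdiv_le (a := (k' : IVec n) i) hD0
    rw [hch] at h1 h2
    constructor <;> linarith
  have key := ENNReal.tsum_comp_le_tsum_of_injective
    (f := fun (k' : {k' : IVec n // dyadicCube n j' k' ⊆ QW n j k w}) =>
      (fun i => (⟨((k' : IVec n) i - ((k i).fdiv 256 + w i) * Dz).toNat, by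
        obtain ⟨hx1, hx2⟩ := hbnd k' i; omega⟩ : Fin (2 ^ d'))))
    (by
      intro a b hab
      apply Subtype.ext
      funext i
      have h3 := congrArg (fun f => (f i : ℕ)) hab
      simp only at h3
      obtain ⟨ha1, _⟩ := hbnd a i
      obtain ⟨hb1, _⟩ := hbnd b i
      omega)
    (fun _ => (1:ℝ≥0∞))
  refine le_trans key (le_of_eq ?_)
  rw [tsum_fintype]
  simp [Finset.sum_const, Finset.card_univ]

/-- Splitting a sum over all of `ℤⁿ` (paired with `En n`) according to the cube `QW n j k w`
containing the corresponding dyadic cube. -/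
lemma split_sum {n : ℕ} {j j' : ℤ} (hjj' : j ≤ j' + 1) (k : IVec n)
    (G : En n × IVec n → ℝ≥0∞) :
    ∑' b : En n × IVec n, G b ≤
      ∑' w : IVec n, ∑' b : En n ×
          {k' : IVec n // dyadicCube n j' k' ⊆ QW n j k w}, G (b.1, (b.2 : IVec n)) := by
  rw [← ENNReal.tsum_sigma'
    (f := fun p : (Σ w : IVec n, En n × {k' : IVec n // dyadicCube n j' k' ⊆ QW n j k w}) =>
      G (p.2.1, (p.2.2 : IVec n)))]
  have hmem : ∀ b : En n × IVec n,
      dyadicCube n j' b.2 ⊆ QW n j k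
        (fun i => (b.2 i).fdiv (2 ^ (j' - (j - 8)).toNat) - (k i).fdiv 256) := by
    intro b
    apply (subset_QW_iff hjj' k b.2 _).mpr
    intro i
    ring
  exact ENNReal.tsum_comp_le_tsum_of_injective
    (f := fun b : En n × IVec n =>
      (⟨fun i => (b.2 i).fdiv (2 ^ (j' - (j - 8)).toNat) - (k i).fdiv 256,
        (b.1, ⟨b.2, hmem b⟩)⟩ :
        Σ w : IVec n, En n × {k' : IVec n // dyadicCube n j' k' ⊆ QW n j k w}))
    (by
      intro a b hab
      have h4 : a.1 = b.1 := congrArg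
        (fun (p : Σ w : IVec n, En n × {k' : IVec n // dyadicCube n j' k' ⊆ QW n j k w}) =>
          p.2.1) hab
      have h5 : a.2 = b.2 := congrArg
        (fun (p : Σ w : IVec n, En n × {k' : IVec n // dyadicCube n j' k' ⊆ QW n j k w}) =>
          ((p.2.2 : IVec n))) hab
      exact Prod.ext h4 h5)
    _

/-- Abstract Cauchy–Schwarz + Hölder core estimate. -/
lemma abstract_core {ι ι' : Type*} [Countable ι] [Countable ι']
    (U : ι → ℝ≥0∞) (V : ι' → ℝ≥0∞) (A : ι → ℝ≥0∞) (B4 : ι → ι' → ℝ≥0∞)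
    {p : ℝ} (hp : 2 ≤ p) (cA K M : ℝ≥0∞)
    (hA : ∀ a, A a ≤ cA)
    (hK1 : ∀ a, ∑' b, B4 a b ≤ K) (hK2 : ∀ b, ∑' a, B4 a b ≤ K)
    (hone1 : ∑' _a : ι, (1:ℝ≥0∞) ≤ M) (hone2 : ∑' _b : ι', (1:ℝ≥0∞) ≤ M) :
    ∑' a, ∑' b, U a * V b * (A a * B4 a b) ≤
      (cA * K * M ^ (1 - 2/p)) * (∑' a, U a ^ p) ^ (1/p) * (∑' b, V b ^ p) ^ (1/p) := by
  have hp0 : (0:ℝ) < p := by linarith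
  have hx0 : (0:ℝ) ≤ 1 - 2/p := by
    have : 2/p ≤ 1 := by rw [div_le_one hp0]; linarith
    linarith
  set f : ι × ι' → ℝ≥0∞ := fun q => U q.1 * (A q.1 * B4 q.1 q.2) ^ (1/2 : ℝ) with hf
  set g : ι × ι' → ℝ≥0∞ := fun q => V q.2 * (A q.1 * B4 q.1 q.2) ^ (1/2 : ℝ) with hg
  have hfg : ∀ q : ι × ι', U q.1 * V q.2 * (A q.1 * B4 q.1 q.2) = f q * g q := by
    intro q
    rw [hf, hg]
    simp only
    have : (A q.1 * B4 q.1 q.2) ^ (1/2 : ℝ) * (A q.1 * B4 q.1 q.2) ^ (1/2 : ℝ)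
        = A q.1 * B4 q.1 q.2 := by
      rw [← ENNReal.rpow_add_of_nonneg _ _ (by norm_num) (by norm_num)]
      norm_num
    calc U q.1 * V q.2 * (A q.1 * B4 q.1 q.2)
        = U q.1 * V q.2 * ((A q.1 * B4 q.1 q.2) ^ (1/2 : ℝ) * (A q.1 * B4 q.1 q.2) ^ (1/2 : ℝ)) := by
          rw [this]
      _ = (U q.1 * (A q.1 * B4 q.1 q.2) ^ (1/2 : ℝ)) * (V q.2 * (A q.1 * B4 q.1 q.2) ^ (1/2 : ℝ)) := by
          ring
  have hf2 : ∀ q : ι × ι', f q ^ (2:ℝ) = U q.1 ^ (2:ℝ) * (A q.1 * B4 q.1 q.2) := by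
    intro q
    rw [hf]
    simp only
    rw [ENNReal.mul_rpow_of_nonneg _ _ (by norm_num : (0:ℝ) ≤ 2), ← ENNReal.rpow_mul]
    norm_num
  have hg2 : ∀ q : ι × ι', g q ^ (2:ℝ) = V q.2 ^ (2:ℝ) * (A q.1 * B4 q.1 q.2) := by
    intro q
    rw [hg]
    simp only
    rw [ENNReal.mul_rpow_of_nonneg _ _ (by norm_num : (0:ℝ) ≤ 2), ← ENNReal.rpow_mul]
    norm_num
  -- the two squared factors
  have hF1 : ∑' q : ι × ι', U q.1 ^ (2:ℝ) * (A q.1 * B4 q.1 q.2)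
      ≤ (cA * K * M ^ (1 - 2/p)) * (∑' a, U a ^ p) ^ (2/p) := by
    rw [ENNReal.tsum_prod']
    calc ∑' a, ∑' b, U a ^ (2:ℝ) * (A a * B4 a b)
        = ∑' a, (U a ^ (2:ℝ) * A a) * ∑' b, B4 a b := by
          apply tsum_congr; intro a
          rw [ENNReal.tsum_mul_left, ENNReal.tsum_mul_left, ← mul_assoc]
      _ ≤ ∑' a, (U a ^ (2:ℝ) * cA) * K := by
          apply ENNReal.tsum_le_tsum; intro a
          exact mul_le_mul' (mul_le_mul' le_rfl (hA a)) (hK1 a)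
      _ = (cA * K) * ∑' a, U a ^ (2:ℝ) := by
          rw [← ENNReal.tsum_mul_left]
          apply tsum_congr; intro a; ring
      _ ≤ (cA * K) * ((∑' a, U a ^ p) ^ (2/p) * M ^ (1 - 2/p)) := by
          apply mul_le_mul' le_rfl
          refine le_trans (tsum_sq_le U hp) ?_
          exact mul_le_mul' le_rfl (ENNReal.rpow_le_rpow hone1 hx0)
      _ = (cA * K * M ^ (1 - 2/p)) * (∑' a, U a ^ p) ^ (2/p) := by ring
  have hF2 : ∑' q : ι × ι', V q.2 ^ (2:ℝ) * (A q.1 * B4 q.1 q.2)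
      ≤ (cA * K * M ^ (1 - 2/p)) * (∑' b, V b ^ p) ^ (2/p) := by
    rw [ENNReal.tsum_prod']
    refine le_trans (le_of_eq ENNReal.tsum_comm) ?_
    calc ∑' b, ∑' a, V b ^ (2:ℝ) * (A a * B4 a b)
        ≤ ∑' b, ∑' a, V b ^ (2:ℝ) * (cA * B4 a b) := by
          apply ENNReal.tsum_le_tsum; intro b
          apply ENNReal.tsum_le_tsum; intro a
          exact mul_le_mul' le_rfl (mul_le_mul' (hA a) le_rfl)
      _ = ∑' b, (V b ^ (2:ℝ) * cA) * ∑' a, B4 a b := by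
          apply tsum_congr; intro b
          rw [ENNReal.tsum_mul_left, ENNReal.tsum_mul_left, ← mul_assoc]
      _ ≤ ∑' b, (V b ^ (2:ℝ) * cA) * K := by
          apply ENNReal.tsum_le_tsum; intro b
          exact mul_le_mul' le_rfl (hK2 b)
      _ = (cA * K) * ∑' b, V b ^ (2:ℝ) := by
          rw [← ENNReal.tsum_mul_left]
          apply tsum_congr; intro b; ring
      _ ≤ (cA * K) * ((∑' b, V b ^ p) ^ (2/p) * M ^ (1 - 2/p)) := by
          apply mul_le_mul' le_rfl
          refine le_trans (tsum_sq_le V hp) ?_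
          exact mul_le_mul' le_rfl (ENNReal.rpow_le_rpow hone2 hx0)
      _ = (cA * K * M ^ (1 - 2/p)) * (∑' b, V b ^ p) ^ (2/p) := by ring
  -- Cauchy–Schwarz
  calc ∑' a, ∑' b, U a * V b * (A a * B4 a b)
      = ∑' q : ι × ι', f q * g q := by
        rw [← ENNReal.tsum_prod]
        exact tsum_congr fun q => hfg q
    _ ≤ (∑' q : ι × ι', f q ^ (2:ℝ)) ^ (1/2 : ℝ) * (∑' q : ι × ι', g q ^ (2:ℝ)) ^ (1/2 : ℝ) :=
        tsum_cauchy_schwarz f g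
    _ = (∑' q : ι × ι', U q.1 ^ (2:ℝ) * (A q.1 * B4 q.1 q.2)) ^ (1/2 : ℝ)
        * (∑' q : ι × ι', V q.2 ^ (2:ℝ) * (A q.1 * B4 q.1 q.2)) ^ (1/2 : ℝ) := by
        rw [tsum_congr hf2, tsum_congr hg2]
    _ ≤ ((cA * K * M ^ (1 - 2/p)) * (∑' a, U a ^ p) ^ (2/p)) ^ (1/2 : ℝ)
        * ((cA * K * M ^ (1 - 2/p)) * (∑' b, V b ^ p) ^ (2/p)) ^ (1/2 : ℝ) := by
        exact mul_le_mul' (ENNReal.rpow_le_rpow hF1 (by norm_num))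
          (ENNReal.rpow_le_rpow hF2 (by norm_num))
    _ = (cA * K * M ^ (1 - 2/p)) * (∑' a, U a ^ p) ^ (1/p) * (∑' b, V b ^ p) ^ (1/p) := by
        have e1 : ∀ (S : ℝ≥0∞), ((cA * K * M ^ (1 - 2/p)) * S ^ (2/p)) ^ (1/2 : ℝ)
            = (cA * K * M ^ (1 - 2/p)) ^ (1/2:ℝ) * S ^ (1/p) := by
          intro S
          rw [ENNReal.mul_rpow_of_nonneg _ _ (by norm_num : (0:ℝ) ≤ 1/2), ← ENNReal.rpow_mul,
            show (2/p) * (1/2 : ℝ) = 1/p by ring]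
        rw [e1, e1]
        have hΓ : (cA * K * M ^ (1 - 2/p)) ^ (1/2 : ℝ) * (cA * K * M ^ (1 - 2/p)) ^ (1/2 : ℝ)
            = cA * K * M ^ (1 - 2/p) := by
          rw [← ENNReal.rpow_add_of_nonneg _ _ (by norm_num) (by norm_num)]
          norm_num
        calc (cA * K * M ^ (1 - 2/p)) ^ (1/2:ℝ) * (∑' a, U a ^ p) ^ (1/p)
              * ((cA * K * M ^ (1 - 2/p)) ^ (1/2:ℝ) * (∑' b, V b ^ p) ^ (1/p))
            = ((cA * K * M ^ (1 - 2/p)) ^ (1/2:ℝ) * (cA * K * M ^ (1 - 2/p)) ^ (1/2:ℝ))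
              * (∑' a, U a ^ p) ^ (1/p) * (∑' b, V b ^ p) ^ (1/p) := by ring
          _ = _ := by rw [hΓ]

lemma core_bound {n : ℕ} (hn : 1 ≤ n) {p N : ℝ} (hp1 : 2 ≤ p) (hN : (n:ℝ) < N)
    {j j' : ℤ} (hjj' : j ≤ j' + 1) (k : IVec n) (u v : En n → IVec n → ℝ≥0)
    {K0 : ℝ≥0∞}
    (hK0 : ∀ y : IVec n, (∑' m : IVec n,
      ENNReal.ofReal ((1 + enorm2 (fun i => (y i : ℝ) - (m i : ℝ))) ^ (-(4*N)))) ≤ K0)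
    (w w' : IVec n) :
    (∑' a : En n × {k' : IVec n // dyadicCube n j' k' ⊆ QW n j k w},
      ∑' b : En n × {k'' : IVec n // dyadicCube n j' k'' ⊆ QW n j k w'},
        (u a.1 (a.2 : IVec n) : ℝ≥0∞) * (v b.1 (b.2 : IVec n) : ℝ≥0∞) *
          ENNReal.ofReal
            ((1 + enorm2 (fun i => (2:ℝ) ^ (j - j') * (((a.2 : IVec n)) i : ℝ) - (k i : ℝ))) ^ (-(8*N))) *
          ENNReal.ofReal
            ((1 + enorm2 (fun i => (((a.2 : IVec n)) i : ℝ) - (((b.2 : IVec n)) i : ℝ))) ^ (-(8*N))))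
      ≤ (ENNReal.ofReal ((1 + 2*Real.sqrt n) ^ (4*N)) *
          (ENNReal.ofReal ((1 + 2*Real.sqrt n) ^ (8*N)) * ((2:ℝ≥0∞)^n * K0) *
            ((2:ℝ≥0∞)^n * ENNReal.ofReal ((2:ℝ) ^ ((8:ℝ) * (n:ℝ)))))) *
        (ENNReal.ofReal ((1 + enorm2 (fun i => (w i : ℝ))) ^ (-N)) *
         ENNReal.ofReal ((1 + enorm2 (fun i => (w i : ℝ) - (w' i : ℝ))) ^ (-N)) *
         ENNReal.ofReal ((2:ℝ) ^ ((n : ℝ) * ((j' : ℝ) - (j : ℝ)) * (1 - 2 / p))) *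
         (∑' a : En n × {k' : IVec n // dyadicCube n j' k' ⊆ QW n j k w},
             (u a.1 (a.2 : IVec n) : ℝ≥0∞) ^ (p : ℝ)) ^ (1/p) *
         (∑' b : En n × {k'' : IVec n // dyadicCube n j' k'' ⊆ QW n j k w'},
             (v b.1 (b.2 : IVec n) : ℝ≥0∞) ^ (p : ℝ)) ^ (1/p)) := by
  have hN0 : (0:ℝ) < N := lt_of_le_of_lt (by exact_mod_cast Nat.zero_le n) hN
  have hsn : (0:ℝ) ≤ Real.sqrt n := Real.sqrt_nonneg _
  set α : ℝ := 1 + 2 * Real.sqrt n with hα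
  have hα1 : (1:ℝ) ≤ α := by rw [hα]; linarith
  have hα0 : (0:ℝ) < α := by linarith
  set Dz : ℤ := 2 ^ (j' - (j - 8)).toNat with hDz
  have hDr : (2:ℝ) ≤ (Dz : ℝ) := by
    rw [hDz]
    exact_mod_cast two_le_D hjj'
  -- abbreviations
  set cA : ℝ≥0∞ := ENNReal.ofReal (α ^ (8*N) * (1 + enorm2 (fun i => (w i : ℝ))) ^ (-(8*N)))
    with hcA
  set cB : ℝ≥0∞ := ENNReal.ofReal
    (α ^ (4*N) * (1 + enorm2 (fun i => (w i : ℝ) - (w' i : ℝ))) ^ (-(4*N))) with hcB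
  set B4 : (En n × {k' : IVec n // dyadicCube n j' k' ⊆ QW n j k w}) →
      (En n × {k'' : IVec n // dyadicCube n j' k'' ⊆ QW n j k w'}) → ℝ≥0∞ :=
    fun a b => ENNReal.ofReal
      ((1 + enorm2 (fun i => (((a.2 : IVec n)) i : ℝ) - (((b.2 : IVec n)) i : ℝ))) ^ (-(4*N)))
    with hB4
  set Mq : ℝ≥0∞ := ENNReal.ofReal ((2:ℝ) ^ ((((j':ℝ) - (j:ℝ)) + 8) * n)) with hMq
  -- pointwise bound for the A-kernel
  have hbase : ∀ z : Vec n, (1:ℝ) ≤ 1 + enorm2 z := fun z => by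
    have := enorm2_nonneg z; linarith
  have I2 : ∀ a : En n × {k' : IVec n // dyadicCube n j' k' ⊆ QW n j k w},
      ENNReal.ofReal
          ((1 + enorm2 (fun i => (2:ℝ) ^ (j - j') * (((a.2 : IVec n)) i : ℝ) - (k i : ℝ))) ^ (-(8*N)))
        ≤ cA := by
    intro a
    apply ENNReal.ofReal_le_ofReal
    have hkey := key_weight hn (by norm_num : (2:ℝ) ≤ 256) (fun i => (w i : ℝ))
      (fun i => (2:ℝ) ^ (j - j') * (((a.2 : IVec n)) i : ℝ) - (k i : ℝ))
      (fun i => (2:ℝ) ^ (j - j') * (((a.2 : IVec n)) i : ℝ) - (k i : ℝ) - 256 * (w i : ℝ))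
      (fun i => by ring) (fun i => rho_bound hjj' a.2.2 i)
    exact rpow_neg_le (hbase _) (hbase _) hα0 hkey (by linarith)
  -- pointwise splitting of the B-kernel
  have I1 : ∀ (a : En n × {k' : IVec n // dyadicCube n j' k' ⊆ QW n j k w})
      (b : En n × {k'' : IVec n // dyadicCube n j' k'' ⊆ QW n j k w'}),
      ENNReal.ofReal
          ((1 + enorm2 (fun i => (((a.2 : IVec n)) i : ℝ) - (((b.2 : IVec n)) i : ℝ))) ^ (-(8*N)))
        ≤ cB * B4 a b := by
    intro a b
    set t : ℝ := 1 + enorm2 (fun i => (((a.2 : IVec n)) i : ℝ) - (((b.2 : IVec n)) i : ℝ)) with ht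
    have ht1 : (1:ℝ) ≤ t := hbase _
    have ht0 : (0:ℝ) < t := by linarith
    have hsplit : t ^ (-(8*N)) = t ^ (-(4*N)) * t ^ (-(4*N)) := by
      rw [← Real.rpow_add ht0]
      ring_nf
    have hkey := key_weight hn hDr (fun i => (w i : ℝ) - (w' i : ℝ))
      (fun i => (((a.2 : IVec n)) i : ℝ) - (((b.2 : IVec n)) i : ℝ))
      (fun i => ((((a.2 : IVec n)) i : ℝ) - (((b.2 : IVec n)) i : ℝ))
        - (Dz:ℝ) * ((w i : ℝ) - (w' i : ℝ)))
      (fun i => by ring) (fun i => sigma_bound hjj' a.2.2 b.2.2 i)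
    have hfst : t ^ (-(4*N)) ≤ α ^ (4*N) *
        (1 + enorm2 (fun i => (w i : ℝ) - (w' i : ℝ))) ^ (-(4*N)) :=
      rpow_neg_le (hbase _) ht1 hα0 hkey (by linarith)
    calc ENNReal.ofReal (t ^ (-(8*N)))
        = ENNReal.ofReal (t ^ (-(4*N)) * t ^ (-(4*N))) := by rw [hsplit]
      _ ≤ ENNReal.ofReal ((α ^ (4*N) *
            (1 + enorm2 (fun i => (w i : ℝ) - (w' i : ℝ))) ^ (-(4*N))) * t ^ (-(4*N))) := by
          apply ENNReal.ofReal_le_ofReal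
          apply mul_le_mul_of_nonneg_right hfst (by positivity)
      _ = cB * B4 a b := by
          rw [hcB, hB4, ← ENNReal.ofReal_mul (mul_nonneg (Real.rpow_nonneg hα0.le _)
            (Real.rpow_nonneg (le_trans zero_le_one (hbase _)) _))]
  -- kernel sums
  have hK1 : ∀ a : En n × {k' : IVec n // dyadicCube n j' k' ⊆ QW n j k w},
      ∑' b : En n × {k'' : IVec n // dyadicCube n j' k'' ⊆ QW n j k w'}, B4 a b
        ≤ (2:ℝ≥0∞)^n * K0 := by
    intro a
    have hinj : Function.Injective
        (fun b : En n × {k'' : IVec n // dyadicCube n j' k'' ⊆ QW n j k w'} =>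
          ((b.1, (b.2 : IVec n)) : En n × IVec n)) := by
      intro x y hxy
      simp only [Prod.mk.injEq] at hxy
      exact Prod.ext hxy.1 (Subtype.ext hxy.2)
    calc ∑' b, B4 a b
        ≤ ∑' b : En n × IVec n, ENNReal.ofReal
            ((1 + enorm2 (fun i => (((a.2 : IVec n)) i : ℝ) - ((b.2) i : ℝ))) ^ (-(4*N))) :=
          ENNReal.tsum_comp_le_tsum_of_injective hinj _
      _ = ∑' _ε : En n, ∑' m : IVec n, ENNReal.ofReal
            ((1 + enorm2 (fun i => (((a.2 : IVec n)) i : ℝ) - ((m) i : ℝ))) ^ (-(4*N))) :=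
          ENNReal.tsum_prod'
      _ ≤ ∑' _ε : En n, K0 := ENNReal.tsum_le_tsum (fun _ => hK0 (a.2 : IVec n))
      _ ≤ (2:ℝ≥0∞)^n * K0 := tsum_En_le K0
  have hK2 : ∀ b : En n × {k'' : IVec n // dyadicCube n j' k'' ⊆ QW n j k w'},
      ∑' a : En n × {k' : IVec n // dyadicCube n j' k' ⊆ QW n j k w}, B4 a b
        ≤ (2:ℝ≥0∞)^n * K0 := by
    intro b
    have hflip : ∀ a : En n × {k' : IVec n // dyadicCube n j' k' ⊆ QW n j k w},
        B4 a b = ENNReal.ofReal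
          ((1 + enorm2 (fun i => (((b.2 : IVec n)) i : ℝ) - (((a.2 : IVec n)) i : ℝ))) ^ (-(4*N))) := by
      intro a
      rw [hB4]
      simp only
      rw [enorm2_sub_comm]
    rw [tsum_congr hflip]
    have hinj : Function.Injective
        (fun a : En n × {k' : IVec n // dyadicCube n j' k' ⊆ QW n j k w} =>
          ((a.1, (a.2 : IVec n)) : En n × IVec n)) := by
      intro x y hxy
      simp only [Prod.mk.injEq] at hxy
      exact Prod.ext hxy.1 (Subtype.ext hxy.2)
    calc ∑' a : En n × {k' : IVec n // dyadicCube n j' k' ⊆ QW n j k w},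
          ENNReal.ofReal
            ((1 + enorm2 (fun i => (((b.2 : IVec n)) i : ℝ) - (((a.2 : IVec n)) i : ℝ))) ^ (-(4*N)))
        ≤ ∑' a : En n × IVec n, ENNReal.ofReal
            ((1 + enorm2 (fun i => (((b.2 : IVec n)) i : ℝ) - ((a.2) i : ℝ))) ^ (-(4*N))) :=
          ENNReal.tsum_comp_le_tsum_of_injective hinj _
      _ = ∑' _ε : En n, ∑' m : IVec n, ENNReal.ofReal
            ((1 + enorm2 (fun i => (((b.2 : IVec n)) i : ℝ) - ((m) i : ℝ))) ^ (-(4*N))) :=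
          ENNReal.tsum_prod'
      _ ≤ ∑' _ε : En n, K0 := ENNReal.tsum_le_tsum (fun _ => hK0 (b.2 : IVec n))
      _ ≤ (2:ℝ≥0∞)^n * K0 := tsum_En_le K0
  -- cardinality bounds
  have hone1 : ∑' _a : En n × {k' : IVec n // dyadicCube n j' k' ⊆ QW n j k w}, (1:ℝ≥0∞)
      ≤ (2:ℝ≥0∞)^n * Mq := by
    calc ∑' _a : En n × {k' : IVec n // dyadicCube n j' k' ⊆ QW n j k w}, (1:ℝ≥0∞)
        = ∑' _ε : En n, ∑' _k' : {k' : IVec n // dyadicCube n j' k' ⊆ QW n j k w}, (1:ℝ≥0∞) :=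
          ENNReal.tsum_prod'
      _ ≤ ∑' _ε : En n, Mq := ENNReal.tsum_le_tsum (fun _ => count_le hjj' k w)
      _ ≤ (2:ℝ≥0∞)^n * Mq := tsum_En_le Mq
  have hone2 : ∑' _b : En n × {k'' : IVec n // dyadicCube n j' k'' ⊆ QW n j k w'}, (1:ℝ≥0∞)
      ≤ (2:ℝ≥0∞)^n * Mq := by
    calc ∑' _b : En n × {k'' : IVec n // dyadicCube n j' k'' ⊆ QW n j k w'}, (1:ℝ≥0∞)
        = ∑' _ε : En n, ∑' _k'' : {k'' : IVec n // dyadicCube n j' k'' ⊆ QW n j k w'}, (1:ℝ≥0∞) :=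
          ENNReal.tsum_prod'
      _ ≤ ∑' _ε : En n, Mq := ENNReal.tsum_le_tsum (fun _ => count_le hjj' k w')
      _ ≤ (2:ℝ≥0∞)^n * Mq := tsum_En_le Mq
  -- exponent facts
  have hp0 : (0:ℝ) < p := by linarith
  have hx0 : (0:ℝ) ≤ 1 - 2/p := by
    have : 2/p ≤ 1 := by rw [div_le_one hp0]; linarith
    linarith
  have hx1 : (1:ℝ) - 2/p ≤ 1 := by
    have : 0 ≤ 2/p := by positivity
    linarith
  -- scalar comparisons
  have hcB_le : cB ≤ ENNReal.ofReal (α^(4*N)) *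
      ENNReal.ofReal ((1 + enorm2 (fun i => (w i : ℝ) - (w' i : ℝ))) ^ (-N)) := by
    rw [hcB, ENNReal.ofReal_mul (Real.rpow_nonneg hα0.le _)]
    exact mul_le_mul' le_rfl (ENNReal.ofReal_le_ofReal (rpow_exp_mono (hbase _) (by linarith)))
  have hcA_le : cA ≤ ENNReal.ofReal (α^(8*N)) *
      ENNReal.ofReal ((1 + enorm2 (fun i => (w i : ℝ))) ^ (-N)) := by
    rw [hcA, ENNReal.ofReal_mul (Real.rpow_nonneg hα0.le _)]
    exact mul_le_mul' le_rfl (ENNReal.ofReal_le_ofReal (rpow_exp_mono (hbase _) (by linarith)))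
  have h2n1 : (1:ℝ≥0∞) ≤ (2:ℝ≥0∞)^n := by
    calc (1:ℝ≥0∞) = 1^n := (one_pow n).symm
      _ ≤ (2:ℝ≥0∞)^n := pow_le_pow_left₀ zero_le (by norm_num : (1:ℝ≥0∞) ≤ 2) n
  have hMx : ((2:ℝ≥0∞)^n * Mq) ^ (1 - 2/p) ≤ (2:ℝ≥0∞)^n *
      (ENNReal.ofReal ((2:ℝ) ^ ((8:ℝ) * (n:ℝ))) *
        ENNReal.ofReal ((2:ℝ) ^ ((n : ℝ) * ((j' : ℝ) - (j : ℝ)) * (1 - 2 / p)))) := by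
    rw [ENNReal.mul_rpow_of_nonneg _ _ hx0]
    apply mul_le_mul'
    · calc ((2:ℝ≥0∞)^n) ^ (1 - 2/p) ≤ ((2:ℝ≥0∞)^n) ^ (1:ℝ) :=
          ENNReal.rpow_le_rpow_of_exponent_le h2n1 hx1
        _ = (2:ℝ≥0∞)^n := ENNReal.rpow_one _
    · rw [hMq, ENNReal.ofReal_rpow_of_pos (by positivity), ← ENNReal.ofReal_mul (by positivity)]
      apply ENNReal.ofReal_le_ofReal
      rw [← Real.rpow_mul (by norm_num : (0:ℝ) ≤ 2),
        show ((((j':ℝ) - (j:ℝ)) + 8) * (n:ℝ)) * (1 - 2/p)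
          = (8:ℝ) * (n:ℝ) * (1 - 2/p) + (n : ℝ) * ((j' : ℝ) - (j : ℝ)) * (1 - 2 / p) by ring,
        Real.rpow_add (by norm_num : (0:ℝ) < 2)]
      apply mul_le_mul_of_nonneg_right _ (Real.rpow_nonneg (by norm_num) _)
      apply Real.rpow_le_rpow_of_exponent_le (by norm_num : (1:ℝ) ≤ 2)
      nlinarith [Nat.cast_nonneg (α := ℝ) n]
  -- apply the abstract core estimate
  have habs := abstract_core
    (fun a : En n × {k' : IVec n // dyadicCube n j' k' ⊆ QW n j k w} =>
      (u a.1 (a.2 : IVec n) : ℝ≥0∞))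
    (fun b : En n × {k'' : IVec n // dyadicCube n j' k'' ⊆ QW n j k w'} =>
      (v b.1 (b.2 : IVec n) : ℝ≥0∞))
    (fun a => ENNReal.ofReal
      ((1 + enorm2 (fun i => (2:ℝ) ^ (j - j') * (((a.2 : IVec n)) i : ℝ) - (k i : ℝ))) ^ (-(8*N))))
    B4 hp1 cA ((2:ℝ≥0∞)^n * K0) ((2:ℝ≥0∞)^n * Mq) I2 hK1 hK2 hone1 hone2
  calc (∑' a : En n × {k' : IVec n // dyadicCube n j' k' ⊆ QW n j k w},
      ∑' b : En n × {k'' : IVec n // dyadicCube n j' k'' ⊆ QW n j k w'},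
        (u a.1 (a.2 : IVec n) : ℝ≥0∞) * (v b.1 (b.2 : IVec n) : ℝ≥0∞) *
          ENNReal.ofReal
            ((1 + enorm2 (fun i => (2:ℝ) ^ (j - j') * (((a.2 : IVec n)) i : ℝ) - (k i : ℝ))) ^ (-(8*N))) *
          ENNReal.ofReal
            ((1 + enorm2 (fun i => (((a.2 : IVec n)) i : ℝ) - (((b.2 : IVec n)) i : ℝ))) ^ (-(8*N))))
      ≤ ∑' a : En n × {k' : IVec n // dyadicCube n j' k' ⊆ QW n j k w},
        ∑' b : En n × {k'' : IVec n // dyadicCube n j' k'' ⊆ QW n j k w'},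
          cB * ((u a.1 (a.2 : IVec n) : ℝ≥0∞) * (v b.1 (b.2 : IVec n) : ℝ≥0∞) *
            (ENNReal.ofReal
              ((1 + enorm2 (fun i => (2:ℝ) ^ (j - j') * (((a.2 : IVec n)) i : ℝ) - (k i : ℝ))) ^ (-(8*N)))
              * B4 a b)) := by
        apply ENNReal.tsum_le_tsum; intro a
        apply ENNReal.tsum_le_tsum; intro b
        calc (u a.1 (a.2 : IVec n) : ℝ≥0∞) * (v b.1 (b.2 : IVec n) : ℝ≥0∞) *
            ENNReal.ofReal
              ((1 + enorm2 (fun i => (2:ℝ) ^ (j - j') * (((a.2 : IVec n)) i : ℝ) - (k i : ℝ))) ^ (-(8*N))) *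
            ENNReal.ofReal
              ((1 + enorm2 (fun i => (((a.2 : IVec n)) i : ℝ) - (((b.2 : IVec n)) i : ℝ))) ^ (-(8*N)))
            ≤ (u a.1 (a.2 : IVec n) : ℝ≥0∞) * (v b.1 (b.2 : IVec n) : ℝ≥0∞) *
              ENNReal.ofReal
                ((1 + enorm2 (fun i => (2:ℝ) ^ (j - j') * (((a.2 : IVec n)) i : ℝ) - (k i : ℝ))) ^ (-(8*N))) *
              (cB * B4 a b) := mul_le_mul' le_rfl (I1 a b)
          _ = cB * ((u a.1 (a.2 : IVec n) : ℝ≥0∞) * (v b.1 (b.2 : IVec n) : ℝ≥0∞) *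
              (ENNReal.ofReal
                ((1 + enorm2 (fun i => (2:ℝ) ^ (j - j') * (((a.2 : IVec n)) i : ℝ) - (k i : ℝ))) ^ (-(8*N)))
                * B4 a b)) := by ring
    _ = cB * ∑' a : En n × {k' : IVec n // dyadicCube n j' k' ⊆ QW n j k w},
        ∑' b : En n × {k'' : IVec n // dyadicCube n j' k'' ⊆ QW n j k w'},
          (u a.1 (a.2 : IVec n) : ℝ≥0∞) * (v b.1 (b.2 : IVec n) : ℝ≥0∞) *
            (ENNReal.ofReal
              ((1 + enorm2 (fun i => (2:ℝ) ^ (j - j') * (((a.2 : IVec n)) i : ℝ) - (k i : ℝ))) ^ (-(8*N)))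
              * B4 a b) := by
        simp_rw [ENNReal.tsum_mul_left]
    _ ≤ cB * (cA * ((2:ℝ≥0∞)^n * K0) * ((2:ℝ≥0∞)^n * Mq) ^ (1 - 2/p) *
        (∑' a : En n × {k' : IVec n // dyadicCube n j' k' ⊆ QW n j k w},
            (u a.1 (a.2 : IVec n) : ℝ≥0∞) ^ (p : ℝ)) ^ (1/p) *
        (∑' b : En n × {k'' : IVec n // dyadicCube n j' k'' ⊆ QW n j k w'},
            (v b.1 (b.2 : IVec n) : ℝ≥0∞) ^ (p : ℝ)) ^ (1/p)) := mul_le_mul' le_rfl habs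
    _ ≤ (ENNReal.ofReal (α^(4*N)) *
          ENNReal.ofReal ((1 + enorm2 (fun i => (w i : ℝ) - (w' i : ℝ))) ^ (-N))) *
        ((ENNReal.ofReal (α^(8*N)) *
            ENNReal.ofReal ((1 + enorm2 (fun i => (w i : ℝ))) ^ (-N))) * ((2:ℝ≥0∞)^n * K0) *
          ((2:ℝ≥0∞)^n * (ENNReal.ofReal ((2:ℝ) ^ ((8:ℝ) * (n:ℝ))) *
            ENNReal.ofReal ((2:ℝ) ^ ((n : ℝ) * ((j' : ℝ) - (j : ℝ)) * (1 - 2 / p))))) *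
          (∑' a : En n × {k' : IVec n // dyadicCube n j' k' ⊆ QW n j k w},
              (u a.1 (a.2 : IVec n) : ℝ≥0∞) ^ (p : ℝ)) ^ (1/p) *
          (∑' b : En n × {k'' : IVec n // dyadicCube n j' k'' ⊆ QW n j k w'},
              (v b.1 (b.2 : IVec n) : ℝ≥0∞) ^ (p : ℝ)) ^ (1/p)) :=
        mul_le_mul' hcB_le
          (mul_le_mul' (mul_le_mul' (mul_le_mul' (mul_le_mul' hcA_le le_rfl) hMx) le_rfl) le_rfl)
    _ = _ := by ring

lemma split_sum' {n : ℕ} {j j' : ℤ} (hjj' : j ≤ j' + 1) (k : IVec n)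
    (G : En n → IVec n → ℝ≥0∞) :
    ∑' ε : En n, ∑' m : IVec n, G ε m ≤
      ∑' w : IVec n, ∑' b : En n × {k' : IVec n // dyadicCube n j' k' ⊆ QW n j k w},
        G b.1 (b.2 : IVec n) := by
  have h0 : ∑' ε : En n, ∑' m : IVec n, G ε m = ∑' b : En n × IVec n, G b.1 b.2 :=
    (ENNReal.tsum_prod' (f := fun b : En n × IVec n => G b.1 b.2)).symm
  rw [h0]
  exact split_sum hjj' k (fun b => G b.1 b.2)


end St10

open St10

/-- the Cauchy–Schwarz-type estimate for `2 ≤ p < ∞` (`N > n`),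
with both sides valued in `[0,∞]`. -/
theorem statement10 (n : ℕ) (hn : 1 ≤ n) (p N : ℝ) (hp1 : 2 ≤ p)
    (hN : (n : ℝ) < N) :
    ∃ C : ℝ, 0 < C ∧ ∀ (j j' : ℤ), j ≤ j' + 1 → ∀ (k : IVec n)
      (u v : En n → IVec n → ℝ≥0),
      (∑' (ε' : En n) (k' : IVec n) (ε'' : En n) (k'' : IVec n),
          (u ε' k' : ℝ≥0∞) * (v ε'' k'' : ℝ≥0∞) *
            ENNReal.ofReal
              ((1 + enorm2 (fun i => (2:ℝ) ^ (j - j') * (k' i : ℝ) - (k i : ℝ))) ^ (-(8*N))) *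
            ENNReal.ofReal
              ((1 + enorm2 (fun i => (k' i : ℝ) - (k'' i : ℝ))) ^ (-(8*N)))) ≤
      ENNReal.ofReal C *
        ∑' (w : IVec n) (w' : IVec n),
          ENNReal.ofReal ((1 + enorm2 (fun i => (w i : ℝ))) ^ (-N)) *
          ENNReal.ofReal ((1 + enorm2 (fun i => (w i : ℝ) - (w' i : ℝ))) ^ (-N)) *
          ENNReal.ofReal ((2:ℝ) ^ ((n : ℝ) * ((j' : ℝ) - (j : ℝ)) * (1 - 2 / p))) *
          (∑' (ε' : En n) (k' : {k' : IVec n // dyadicCube n j' k' ⊆ QW n j k w}),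
              (u ε' (k' : IVec n) : ℝ≥0∞) ^ (p : ℝ)) ^ (1 / p) *
          (∑' (ε'' : En n) (k'' : {k'' : IVec n // dyadicCube n j' k'' ⊆ QW n j k w'}),
              (v ε'' (k'' : IVec n) : ℝ≥0∞) ^ (p : ℝ)) ^ (1 / p) := by
  have hN0 : (0:ℝ) < N := lt_of_le_of_lt (by exact_mod_cast Nat.zero_le n) hN
  obtain ⟨K0, hK0ne, hK0⟩ := kernel_lt_top n (s := 4*N)
    (by nlinarith [Nat.cast_nonneg (α := ℝ) n])
  set α : ℝ := 1 + 2 * Real.sqrt n with hα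
  set Ctot : ℝ≥0∞ := ENNReal.ofReal (α ^ (4*N)) *
    (ENNReal.ofReal (α ^ (8*N)) * ((2:ℝ≥0∞)^n * K0) *
      ((2:ℝ≥0∞)^n * ENNReal.ofReal ((2:ℝ) ^ ((8:ℝ) * (n:ℝ))))) with hCtot
  have hCne : Ctot ≠ ∞ := by
    rw [hCtot]
    apply ENNReal.mul_ne_top ENNReal.ofReal_ne_top
    apply ENNReal.mul_ne_top
    · exact ENNReal.mul_ne_top ENNReal.ofReal_ne_top
        (ENNReal.mul_ne_top (ENNReal.pow_ne_top (by norm_num)) hK0ne)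
    · exact ENNReal.mul_ne_top (ENNReal.pow_ne_top (by norm_num)) ENNReal.ofReal_ne_top
  refine ⟨Ctot.toReal + 1, by positivity, ?_⟩
  intro j j' hjj' k u v
  have hCle : Ctot ≤ ENNReal.ofReal (Ctot.toReal + 1) := by
    calc Ctot = ENNReal.ofReal Ctot.toReal := (ENNReal.ofReal_toReal hCne).symm
      _ ≤ ENNReal.ofReal (Ctot.toReal + 1) := ENNReal.ofReal_le_ofReal (by linarith)
  -- step 1: split the inner double sum over cubes
  calc ∑' (ε' : En n) (k' : IVec n) (ε'' : En n) (k'' : IVec n),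
      (u ε' k' : ℝ≥0∞) * (v ε'' k'' : ℝ≥0∞) *
        ENNReal.ofReal
          ((1 + enorm2 (fun i => (2:ℝ) ^ (j - j') * (k' i : ℝ) - (k i : ℝ))) ^ (-(8*N))) *
        ENNReal.ofReal
          ((1 + enorm2 (fun i => (k' i : ℝ) - (k'' i : ℝ))) ^ (-(8*N)))
      ≤ ∑' (ε' : En n) (k' : IVec n), ∑' (w' : IVec n),
        ∑' (b : En n × {k'' : IVec n // dyadicCube n j' k'' ⊆ QW n j k w'}),
          (u ε' k' : ℝ≥0∞) * (v b.1 ((b.2 : IVec n)) : ℝ≥0∞) *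
            ENNReal.ofReal
              ((1 + enorm2 (fun i => (2:ℝ) ^ (j - j') * (k' i : ℝ) - (k i : ℝ))) ^ (-(8*N))) *
            ENNReal.ofReal
              ((1 + enorm2 (fun i => (k' i : ℝ) - ((b.2 : IVec n) i : ℝ))) ^ (-(8*N))) := by
        apply ENNReal.tsum_le_tsum; intro ε'
        apply ENNReal.tsum_le_tsum; intro k'
        exact split_sum' hjj' k (fun ε'' k'' =>
          (u ε' k' : ℝ≥0∞) * (v ε'' k'' : ℝ≥0∞) *
            ENNReal.ofReal
              ((1 + enorm2 (fun i => (2:ℝ) ^ (j - j') * (k' i : ℝ) - (k i : ℝ))) ^ (-(8*N))) *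
            ENNReal.ofReal
              ((1 + enorm2 (fun i => (k' i : ℝ) - (k'' i : ℝ))) ^ (-(8*N))))
    _ = ∑' (w' : IVec n), ∑' (ε' : En n) (k' : IVec n),
        ∑' (b : En n × {k'' : IVec n // dyadicCube n j' k'' ⊆ QW n j k w'}),
          (u ε' k' : ℝ≥0∞) * (v b.1 ((b.2 : IVec n)) : ℝ≥0∞) *
            ENNReal.ofReal
              ((1 + enorm2 (fun i => (2:ℝ) ^ (j - j') * (k' i : ℝ) - (k i : ℝ))) ^ (-(8*N))) *
            ENNReal.ofReal
              ((1 + enorm2 (fun i => (k' i : ℝ) - ((b.2 : IVec n) i : ℝ))) ^ (-(8*N))) := by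
        rw [tsum_congr (fun ε' => ENNReal.tsum_comm)]
        exact ENNReal.tsum_comm
    _ ≤ ∑' (w' : IVec n), ∑' (w : IVec n),
        ∑' (a : En n × {k' : IVec n // dyadicCube n j' k' ⊆ QW n j k w}),
        ∑' (b : En n × {k'' : IVec n // dyadicCube n j' k'' ⊆ QW n j k w'}),
          (u a.1 ((a.2 : IVec n)) : ℝ≥0∞) * (v b.1 ((b.2 : IVec n)) : ℝ≥0∞) *
            ENNReal.ofReal
              ((1 + enorm2 (fun i => (2:ℝ) ^ (j - j') * ((a.2 : IVec n) i : ℝ) - (k i : ℝ))) ^ (-(8*N))) *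
            ENNReal.ofReal
              ((1 + enorm2 (fun i => ((a.2 : IVec n) i : ℝ) - ((b.2 : IVec n) i : ℝ))) ^ (-(8*N))) := by
        apply ENNReal.tsum_le_tsum; intro w'
        exact split_sum' hjj' k (fun ε' k' =>
          ∑' (b : En n × {k'' : IVec n // dyadicCube n j' k'' ⊆ QW n j k w'}),
            (u ε' k' : ℝ≥0∞) * (v b.1 ((b.2 : IVec n)) : ℝ≥0∞) *
              ENNReal.ofReal
                ((1 + enorm2 (fun i => (2:ℝ) ^ (j - j') * (k' i : ℝ) - (k i : ℝ))) ^ (-(8*N))) *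
              ENNReal.ofReal
                ((1 + enorm2 (fun i => (k' i : ℝ) - ((b.2 : IVec n) i : ℝ))) ^ (-(8*N))))
    _ = ∑' (w : IVec n) (w' : IVec n),
        ∑' (a : En n × {k' : IVec n // dyadicCube n j' k' ⊆ QW n j k w}),
        ∑' (b : En n × {k'' : IVec n // dyadicCube n j' k'' ⊆ QW n j k w'}),
          (u a.1 ((a.2 : IVec n)) : ℝ≥0∞) * (v b.1 ((b.2 : IVec n)) : ℝ≥0∞) *
            ENNReal.ofReal
              ((1 + enorm2 (fun i => (2:ℝ) ^ (j - j') * ((a.2 : IVec n) i : ℝ) - (k i : ℝ))) ^ (-(8*N))) *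
            ENNReal.ofReal
              ((1 + enorm2 (fun i => ((a.2 : IVec n) i : ℝ) - ((b.2 : IVec n) i : ℝ))) ^ (-(8*N))) :=
        ENNReal.tsum_comm
    _ ≤ ∑' (w : IVec n) (w' : IVec n), Ctot *
          (ENNReal.ofReal ((1 + enorm2 (fun i => (w i : ℝ))) ^ (-N)) *
           ENNReal.ofReal ((1 + enorm2 (fun i => (w i : ℝ) - (w' i : ℝ))) ^ (-N)) *
           ENNReal.ofReal ((2:ℝ) ^ ((n : ℝ) * ((j' : ℝ) - (j : ℝ)) * (1 - 2 / p))) *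
           (∑' (ε' : En n) (k' : {k' : IVec n // dyadicCube n j' k' ⊆ QW n j k w}),
               (u ε' (k' : IVec n) : ℝ≥0∞) ^ (p : ℝ)) ^ (1 / p) *
           (∑' (ε'' : En n) (k'' : {k'' : IVec n // dyadicCube n j' k'' ⊆ QW n j k w'}),
               (v ε'' (k'' : IVec n) : ℝ≥0∞) ^ (p : ℝ)) ^ (1 / p)) := by
        apply ENNReal.tsum_le_tsum; intro w
        apply ENNReal.tsum_le_tsum; intro w'
        have hc := core_bound hn hp1 hN hjj' k u v hK0 w w'
        have eS1 : (∑' a : En n × {k' : IVec n // dyadicCube n j' k' ⊆ QW n j k w},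
            (u a.1 (a.2 : IVec n) : ℝ≥0∞) ^ (p : ℝ))
            = ∑' (ε' : En n) (k' : {k' : IVec n // dyadicCube n j' k' ⊆ QW n j k w}),
              (u ε' (k' : IVec n) : ℝ≥0∞) ^ (p : ℝ) := ENNReal.tsum_prod'
        have eS2 : (∑' b : En n × {k'' : IVec n // dyadicCube n j' k'' ⊆ QW n j k w'},
            (v b.1 (b.2 : IVec n) : ℝ≥0∞) ^ (p : ℝ))
            = ∑' (ε'' : En n) (k'' : {k'' : IVec n // dyadicCube n j' k'' ⊆ QW n j k w'}),
              (v ε'' (k'' : IVec n) : ℝ≥0∞) ^ (p : ℝ) := ENNReal.tsum_prod'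
        rw [← eS1, ← eS2]
        exact hc
    _ ≤ ENNReal.ofReal (Ctot.toReal + 1) *
        ∑' (w : IVec n) (w' : IVec n),
          ENNReal.ofReal ((1 + enorm2 (fun i => (w i : ℝ))) ^ (-N)) *
          ENNReal.ofReal ((1 + enorm2 (fun i => (w i : ℝ) - (w' i : ℝ))) ^ (-N)) *
          ENNReal.ofReal ((2:ℝ) ^ ((n : ℝ) * ((j' : ℝ) - (j : ℝ)) * (1 - 2 / p))) *
          (∑' (ε' : En n) (k' : {k' : IVec n // dyadicCube n j' k' ⊆ QW n j k w}),
              (u ε' (k' : IVec n) : ℝ≥0∞) ^ (p : ℝ)) ^ (1 / p) *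
          (∑' (ε'' : En n) (k'' : {k'' : IVec n // dyadicCube n j' k'' ⊆ QW n j k w'}),
              (v ε'' (k'' : IVec n) : ℝ≥0∞) ^ (p : ℝ)) ^ (1 / p) := by
        simp_rw [ENNReal.tsum_mul_left]
        exact mul_le_mul' hCle le_rfl
end
end

section
/- Let n ≥ 1, 1 < p < ∞, 1 < q < ∞, γ₁, γ₂ ∈ ℝ, and let p₁ ≥ 1, w ≥ 0 and q₁ ≥ 1 be reals such that either (w = 0 and q₁ = 1) or (w > 0 and 1 ≤ q₁ ≤ q). Then there is a constant C > 0 such that every family a = (a^ε_{j,k})_{ε∈E_n, j∈ℤ, k∈ℤ^n} of complex numbers satisfies M^{γ₁−w, γ₂}_{p/p₁, q/q₁}(a) ≤ C · M^{γ₁, γ₂+w}_{p,q}(a) as values in [0,∞]. -/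
noncomputable section

open MeasureTheory Real Complex
open scoped ENNReal NNReal

/-- The Besov-Q quantity `M^{γ₁,γ₂}_{p,q}(a)`. -/
def besovM (n : ℕ) (p q γ₁ γ₂ : ℝ) (a : En n → ℤ → IVec n → ℂ) : ℝ≥0∞ :=
  ⨆ (j₀ : ℤ) (k₀ : IVec n),
    ENNReal.ofReal ((2:ℝ) ^ (-(j₀:ℝ) * (γ₂ - n / p))) *
    (∑' j : {j : ℤ // j₀ ≤ j},
        ENNReal.ofReal ((2:ℝ) ^ (((j:ℤ):ℝ) * q * (γ₁ + n / 2 - n / p))) *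
          (∑' (ε : En n) (k : {k : IVec n // dyadicCube n (j:ℤ) k ⊆ dyadicCube n j₀ k₀}),
              ENNReal.ofReal (‖a ε (j:ℤ) (k : IVec n)‖ ^ p)) ^ (q / p)) ^ (1 / q)

def e2 (x : ℝ) : ℝ≥0∞ := (2:ℝ≥0∞) ^ x

lemma e2_ne_zero (x : ℝ) : e2 x ≠ 0 := by
  simp [e2, ENNReal.rpow_eq_zero_iff]

lemma e2_ne_top (x : ℝ) : e2 x ≠ ⊤ := by
  simp [e2, ENNReal.rpow_eq_top_iff]

lemma e2_add (x y : ℝ) : e2 (x + y) = e2 x * e2 y := by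
  simp [e2, ENNReal.rpow_add x y (two_ne_zero) (by norm_num : (2:ℝ≥0∞) ≠ ⊤)]

lemma e2_rpow (x s : ℝ) : (e2 x) ^ s = e2 (x * s) := by
  simp [e2, ENNReal.rpow_mul]

lemma e2_mono {x y : ℝ} (h : x ≤ y) : e2 x ≤ e2 y :=
  ENNReal.rpow_le_rpow_of_exponent_le (by norm_num) h

lemma ofReal_two_rpow (x : ℝ) : ENNReal.ofReal ((2:ℝ) ^ x) = e2 x := by
  rw [← ENNReal.ofReal_rpow_of_pos (by norm_num : (0:ℝ) < 2)]
  norm_num [e2]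

lemma e2_lt_one {x : ℝ} (hx : x < 0) : e2 x < 1 := by
  have := ENNReal.rpow_lt_one_of_one_lt_of_neg (x := (2:ℝ≥0∞)) (by norm_num) hx
  simpa [e2] using this

lemma tsum_mul_le_Lp_mul_Lq_holder {ι : Type*} [Countable ι] {pp qq : ℝ}
    (hpq : Real.HolderConjugate pp qq) (f g : ι → ℝ≥0∞) :
    ∑' i, f i * g i ≤ (∑' i, f i ^ pp) ^ (1/pp) * (∑' i, g i ^ qq) ^ (1/qq) := by
  letI : MeasurableSpace ι := ⊤
  haveI : MeasurableSingletonClass ι := ⟨fun _ => trivial⟩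
  have h := ENNReal.lintegral_mul_le_Lp_mul_Lq (Measure.count : Measure ι) hpq
    (measurable_of_countable f).aemeasurable (measurable_of_countable g).aemeasurable
  simpa [lintegral_count] using h

lemma finset_rpow_sum_le {ι : Type*} (s : Finset ι) (f : ι → ℝ≥0∞) {r : ℝ}
    (hr0 : 0 < r) (hr1 : r ≤ 1) :
    ∑ i ∈ s, f i ^ r ≤ (s.card : ℝ≥0∞) ^ (1 - r) * (∑ i ∈ s, f i) ^ r := by
  rcases s.eq_empty_or_nonempty with rfl | hs
  · simp [ENNReal.zero_rpow_of_pos hr0]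
  · have hc0 : (s.card : ℝ≥0∞) ≠ 0 := by
      simpa using (Finset.card_pos.mpr hs).ne'
    have hctop : (s.card : ℝ≥0∞) ≠ ⊤ := by simp
    set N : ℝ≥0∞ := (s.card : ℝ≥0∞) with hN
    have hw : ∑ _i ∈ s, N⁻¹ = 1 := by
      simp only [Finset.sum_const, nsmul_eq_mul, hN]
      rw [ENNReal.mul_inv_cancel hc0 hctop]
    have hkey := ENNReal.rpow_arith_mean_le_arith_mean_rpow s
      (fun _ => N⁻¹) (fun i => f i ^ r) hw
      (p := 1/r) (by rw [le_div_iff₀ hr0]; linarith)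
    simp only [← ENNReal.rpow_mul] at hkey
    have hrr : r * (1/r) = 1 := by field_simp
    rw [hrr] at hkey
    simp only [ENNReal.rpow_one] at hkey
    -- hkey : (∑ i in s, N⁻¹ * f i ^ r) ^ (1/r) ≤ ∑ i in s, N⁻¹ * f i
    have h2 : ∑ i ∈ s, N⁻¹ * f i ^ r ≤ (∑ i ∈ s, N⁻¹ * f i) ^ r := by
      calc ∑ i ∈ s, N⁻¹ * f i ^ r
          = ((∑ i ∈ s, N⁻¹ * f i ^ r) ^ (1/r)) ^ r := by
            rw [← ENNReal.rpow_mul, one_div, inv_mul_cancel₀ hr0.ne', ENNReal.rpow_one]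
        _ ≤ (∑ i ∈ s, N⁻¹ * f i) ^ r := ENNReal.rpow_le_rpow hkey hr0.le
    rw [← Finset.mul_sum, ← Finset.mul_sum] at h2
    have h3 : ∑ i ∈ s, f i ^ r ≤ N * ((N⁻¹ * ∑ i ∈ s, f i) ^ r) := by
      calc ∑ i ∈ s, f i ^ r = N * (N⁻¹ * ∑ i ∈ s, f i ^ r) := by
            rw [← mul_assoc, ENNReal.mul_inv_cancel hc0 hctop, one_mul]
        _ ≤ N * ((N⁻¹ * ∑ i ∈ s, f i) ^ r) := mul_le_mul_right h2 N
    refine h3.trans (le_of_eq ?_)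
    rw [ENNReal.mul_rpow_of_nonneg _ _ hr0.le, ENNReal.inv_rpow, ← mul_assoc,
      ENNReal.rpow_sub _ _ hc0 hctop, ENNReal.rpow_one, div_eq_mul_inv]
lemma cube_subset_bounds {n : ℕ} {j j₀ : ℤ} (hj : j₀ ≤ j) {k k₀ : IVec n}
    (hsub : dyadicCube n j k ⊆ dyadicCube n j₀ k₀) (i : Fin n) :
    k₀ i * 2 ^ (j - j₀).toNat ≤ k i ∧ k i < (k₀ i + 1) * 2 ^ (j - j₀).toNat := by
  set m : ℕ := (j - j₀).toNat with hm
  have hx : (fun i => (k i : ℝ) / (2:ℝ) ^ j) ∈ dyadicCube n j k := by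
    intro i
    have h2 : ((2:ℝ) ^ j) ≠ 0 := by positivity
    rw [mul_div_cancel₀ _ h2]
    constructor <;> simp
  have hx0 := hsub hx i
  have hpow : (2:ℝ) ^ (j₀ : ℤ) * ((k i : ℝ) / (2:ℝ) ^ j) = (k i : ℝ) / (2:ℝ) ^ m := by
    have hj' : (j : ℤ) = j₀ + (m : ℤ) := by omega
    rw [hj', zpow_add₀ (by norm_num : (2:ℝ) ≠ 0)]
    have h2 : ((2:ℝ) ^ (j₀:ℤ)) ≠ 0 := by positivity
    rw [zpow_natCast]
    field_simp
  rw [hpow] at hx0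
  have hpos : (0:ℝ) < (2:ℝ) ^ m := by positivity
  obtain ⟨h1, h2⟩ := hx0
  have h1' : (k₀ i : ℝ) * 2 ^ m ≤ k i := (le_div_iff₀ hpos).mp h1
  have h2' : (k i : ℝ) < ((k₀ i : ℝ) + 1) * 2 ^ m := (div_lt_iff₀ hpos).mp h2
  constructor
  · exact_mod_cast h1'
  · exact_mod_cast h2'

lemma cube_subset_card (n : ℕ) {j j₀ : ℤ} (hj : j₀ ≤ j) (k₀ : IVec n) :
    ∃ inst : Fintype {k : IVec n // dyadicCube n j k ⊆ dyadicCube n j₀ k₀},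
      @Fintype.card _ inst ≤ 2 ^ ((j - j₀).toNat * n) := by
  set m : ℕ := (j - j₀).toNat with hm
  have hMn : ((2 ^ m : ℕ) : ℤ) = 2 ^ m := by push_cast; ring
  have hbd : ∀ (k : {k : IVec n // dyadicCube n j k ⊆ dyadicCube n j₀ k₀}) (i : Fin n),
      k₀ i * 2 ^ m ≤ k.1 i ∧ k.1 i < k₀ i * 2 ^ m + 2 ^ m := by
    intro k i
    obtain ⟨h1, h2⟩ := cube_subset_bounds hj k.2 i
    rw [← hm] at h1 h2
    constructor
    · exact h1
    · linarith [h2]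
  have hbound : ∀ (k : {k : IVec n // dyadicCube n j k ⊆ dyadicCube n j₀ k₀}) (i : Fin n),
      (k.1 i - k₀ i * 2 ^ m).toNat < 2 ^ m := by
    intro k i
    obtain ⟨h1, h2⟩ := hbd k i
    omega
  set φ : {k : IVec n // dyadicCube n j k ⊆ dyadicCube n j₀ k₀} → (Fin n → Fin (2 ^ m)) :=
    fun k i => ⟨(k.1 i - k₀ i * 2 ^ m).toNat, hbound k i⟩ with hφ
  have hinj : Function.Injective φ := by
    intro k k' h
    ext i
    obtain ⟨h1, h2⟩ := hbd k i
    obtain ⟨h1', h2'⟩ := hbd k' i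
    have := congrFun h i
    simp only [hφ, Fin.mk.injEq] at this
    omega
  letI inst := Fintype.ofInjective φ hinj
  refine ⟨inst, ?_⟩
  calc Fintype.card {k : IVec n // dyadicCube n j k ⊆ dyadicCube n j₀ k₀}
      ≤ Fintype.card (Fin n → Fin (2 ^ m)) := Fintype.card_le_of_injective φ hinj
    _ = 2 ^ (m * n) := by simp [Fintype.card_fun, pow_mul]
def intShiftEquiv (j₀ : ℤ) : ℕ ≃ {j : ℤ // j₀ ≤ j} where
  toFun m := ⟨j₀ + m, by omega⟩
  invFun j := (j.1 - j₀).toNat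
  left_inv m := by simp
  right_inv j := by
    ext
    simp
    omega

lemma tsum_e2_geo (j₀ : ℤ) {c : ℝ} (hc : 0 < c) :
    ∑' j : {j : ℤ // j₀ ≤ j}, e2 (-(j : ℤ) * c) = e2 (-(j₀:ℝ) * c) * (1 - e2 (-c))⁻¹ := by
  rw [← Equiv.tsum_eq (intShiftEquiv j₀)]
  have : ∀ m : ℕ, e2 (-((intShiftEquiv j₀ m : ℤ) : ℝ) * c) = e2 (-(j₀:ℝ) * c) * (e2 (-c)) ^ m := by
    intro m
    have h1 : (-(((j₀ + m : ℤ)) : ℝ) * c) = (-(j₀:ℝ) * c) + (-c) * m := by push_cast; ring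
    simp only [intShiftEquiv, Equiv.coe_fn_mk]
    rw [h1, e2_add, ← ENNReal.rpow_natCast (e2 (-c)) m, e2_rpow]
  simp only [this]
  rw [ENNReal.tsum_mul_left, ENNReal.tsum_geometric]

lemma e2_natCast (N : ℕ) : ((2^N : ℕ) : ℝ≥0∞) = e2 N := by
  simp [e2, ← ENNReal.rpow_natCast]
lemma stepJ (n : ℕ) (p q γ₁ p₁ w q₁ : ℝ)
    (hp0 : 0 < p) (hq0 : 0 < q) (hp₁ : 1 ≤ p₁) (hq₁ : 1 ≤ q₁)
    (a : En n → ℤ → IVec n → ℂ) (j₀ : ℤ) (k₀ : IVec n) (j : ℤ) (hj : j₀ ≤ j) :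
    e2 ((j:ℝ) * (q/q₁) * ((γ₁ - w) + n/2 - n/(p/p₁))) *
      (∑' (ε : En n) (k : {k : IVec n // dyadicCube n j k ⊆ dyadicCube n j₀ k₀}),
          ENNReal.ofReal (‖a ε j (k : IVec n)‖ ^ (p/p₁))) ^ ((q/q₁)/(p/p₁))
    ≤ e2 ((1-(j₀:ℝ)) * (q/q₁) * n * (p₁-1)/p) * e2 (-(j:ℝ)*(q/q₁)*w) *
      (e2 ((j:ℝ)*q*(γ₁ + n/2 - n/p)) *
        (∑' (ε : En n) (k : {k : IVec n // dyadicCube n j k ⊆ dyadicCube n j₀ k₀}),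
            ENNReal.ofReal (‖a ε j (k : IVec n)‖ ^ p)) ^ (q/p)) ^ (1/q₁) := by
  have hp₁0 : (0:ℝ) < p₁ := lt_of_lt_of_le one_pos hp₁
  have hq₁0 : (0:ℝ) < q₁ := lt_of_lt_of_le one_pos hq₁
  set r : ℝ := 1/p₁ with hr
  have hr0 : 0 < r := by positivity
  have hr1 : r ≤ 1 := by rw [hr, div_le_one hp₁0]; exact hp₁
  have hQP0 : (0:ℝ) ≤ (q/q₁)/(p/p₁) := by positivity
  obtain ⟨inst, hcard⟩ := cube_subset_card n hj k₀
  letI : Fintype {k : IVec n // dyadicCube n j k ⊆ dyadicCube n j₀ k₀} := inst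
  set m : ℕ := (j - j₀).toNat with hm
  have hmr : (m : ℝ) = (j:ℝ) - (j₀:ℝ) := by
    have : (m : ℤ) = j - j₀ := Int.toNat_of_nonneg (by omega)
    exact_mod_cast this
  set g : En n × {k : IVec n // dyadicCube n j k ⊆ dyadicCube n j₀ k₀} → ℝ≥0∞ := fun x => ENNReal.ofReal (‖a x.1 j (x.2 : IVec n)‖ ^ p)
    with hg
  have hpt : ∀ (ε : En n) (k : {k : IVec n // dyadicCube n j k ⊆ dyadicCube n j₀ k₀}),
      ENNReal.ofReal (‖a ε j (k : IVec n)‖ ^ (p/p₁)) = g (ε, k) ^ r := by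
    intro ε k
    rw [hg]
    simp only
    rw [show p/p₁ = p * r by rw [hr, mul_one_div], Real.rpow_mul (norm_nonneg _),
      ← ENNReal.ofReal_rpow_of_nonneg (Real.rpow_nonneg (norm_nonneg _) p) hr0.le]
  have hSP : (∑' (ε : En n) (k : {k : IVec n // dyadicCube n j k ⊆ dyadicCube n j₀ k₀}), ENNReal.ofReal (‖a ε j (k : IVec n)‖ ^ (p/p₁)))
      = ∑ x : En n × {k : IVec n // dyadicCube n j k ⊆ dyadicCube n j₀ k₀}, g x ^ r := by
    simp only [hpt, tsum_fintype]
    exact (Fintype.sum_prod_type (fun x => g x ^ r)).symm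
  have hTs : (∑' (ε : En n) (k : {k : IVec n // dyadicCube n j k ⊆ dyadicCube n j₀ k₀}), ENNReal.ofReal (‖a ε j (k : IVec n)‖ ^ p))
      = ∑ x : En n × {k : IVec n // dyadicCube n j k ⊆ dyadicCube n j₀ k₀}, g x := by
    simp only [tsum_fintype, hg]
    exact (Fintype.sum_prod_type (fun x : En n × {k : IVec n // dyadicCube n j k ⊆ dyadicCube n j₀ k₀} => ENNReal.ofReal (‖a x.1 j (x.2 : IVec n)‖ ^ p))).symm
  set T : ℝ≥0∞ := ∑ x : En n × {k : IVec n // dyadicCube n j k ⊆ dyadicCube n j₀ k₀}, g x with hT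
  have hstep := finset_rpow_sum_le (Finset.univ : Finset (En n × {k : IVec n // dyadicCube n j k ⊆ dyadicCube n j₀ k₀})) g hr0 hr1
  have hcard2 : ((Finset.univ : Finset (En n × {k : IVec n // dyadicCube n j k ⊆ dyadicCube n j₀ k₀})).card : ℝ≥0∞) ≤ e2 ((n:ℝ) * (m + 1)) := by
    have h1 : (Finset.univ : Finset (En n × {k : IVec n // dyadicCube n j k ⊆ dyadicCube n j₀ k₀})).card ≤ 2 ^ (n * (m+1)) := by
      rw [Finset.card_univ, Fintype.card_prod]
      have hEn : Fintype.card (En n) ≤ 2 ^ n :=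
        le_trans (Fintype.card_subtype_le _) (by simp)
      calc Fintype.card (En n) * Fintype.card {k : IVec n // dyadicCube n j k ⊆ dyadicCube n j₀ k₀} ≤ 2 ^ n * 2 ^ (m * n) :=
            Nat.mul_le_mul hEn hcard
        _ = 2 ^ (n * (m+1)) := by rw [← pow_add]; ring_nf
    calc ((Finset.univ : Finset (En n × {k : IVec n // dyadicCube n j k ⊆ dyadicCube n j₀ k₀})).card : ℝ≥0∞) ≤ ((2 ^ (n * (m+1)) : ℕ) : ℝ≥0∞) := by
          exact_mod_cast h1
      _ = e2 ((n * (m+1) : ℕ) : ℝ) := e2_natCast _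
      _ = e2 ((n:ℝ) * (m + 1)) := by push_cast; ring_nf
  rw [hSP, hTs]
  calc e2 ((j:ℝ) * (q/q₁) * ((γ₁ - w) + n/2 - n/(p/p₁))) * (∑ x : En n × {k : IVec n // dyadicCube n j k ⊆ dyadicCube n j₀ k₀}, g x ^ r) ^ ((q/q₁)/(p/p₁))
      ≤ e2 ((j:ℝ) * (q/q₁) * ((γ₁ - w) + n/2 - n/(p/p₁))) *
          (e2 ((n:ℝ) * (m + 1)) ^ (1-r) * T ^ r) ^ ((q/q₁)/(p/p₁)) := by
        refine mul_le_mul_right (ENNReal.rpow_le_rpow ?_ hQP0) _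
        exact hstep.trans (mul_le_mul_left (ENNReal.rpow_le_rpow hcard2 (by linarith)) _)
    _ = e2 ((j:ℝ) * (q/q₁) * ((γ₁ - w) + n/2 - n/(p/p₁)) + (n:ℝ) * (m + 1) * (1-r) * ((q/q₁)/(p/p₁)))
          * T ^ (r * ((q/q₁)/(p/p₁))) := by
        rw [ENNReal.mul_rpow_of_nonneg _ _ hQP0, e2_rpow, e2_rpow, ← ENNReal.rpow_mul,
          e2_add]
        ring
    _ = e2 ((1-(j₀:ℝ)) * (q/q₁) * n * (p₁-1)/p) * e2 (-(j:ℝ)*(q/q₁)*w) *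
          (e2 ((j:ℝ)*q*(γ₁ + n/2 - n/p)) * T ^ (q/p)) ^ (1/q₁) := by
        have hy : (q/p) * (1/q₁) = r * ((q/q₁)/(p/p₁)) := by
          rw [hr]; field_simp
        rw [ENNReal.mul_rpow_of_nonneg _ _ (by positivity : (0:ℝ) ≤ 1/q₁), e2_rpow,
          ← ENNReal.rpow_mul, hy, ← mul_assoc, ← e2_add, ← e2_add]
        congr 2
        rw [hmr, hr]
        field_simp
        ring
lemma reduction (n : ℕ) (p q γ₁ γ₂ p₁ w q₁ : ℝ)
    (hp0 : 0 < p) (hq0 : 0 < q) (hp₁ : 1 ≤ p₁) (hq₁ : 1 ≤ q₁) (hw : 0 ≤ w) (hq₁q : q₁ ≤ q)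
    (G : ℝ≥0∞)
    (hG : ∀ (j₀ : ℤ) (b : {j : ℤ // j₀ ≤ j} → ℝ≥0∞),
      ∑' j : {j : ℤ // j₀ ≤ j}, e2 (-(((j:ℤ):ℝ))*(q/q₁)*w) * (b j) ^ (1/q₁)
        ≤ G * (e2 (-(j₀:ℝ)*(q/q₁)*w) * (∑' j, b j) ^ (1/q₁)))
    (a : En n → ℤ → IVec n → ℂ) :
    besovM n (p/p₁) (q/q₁) (γ₁-w) γ₂ a ≤
      (e2 ((n:ℝ)*(p₁-1)/p) * G ^ (q₁/q)) * besovM n p q γ₁ (γ₂+w) a := by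
  have hp₁0 : (0:ℝ) < p₁ := lt_of_lt_of_le one_pos hp₁
  have hq₁0 : (0:ℝ) < q₁ := lt_of_lt_of_le one_pos hq₁
  simp only [besovM, ofReal_two_rpow]
  refine iSup_le fun j₀ => iSup_le fun k₀ => ?_
  set T : {j : ℤ // j₀ ≤ j} → ℝ≥0∞ := fun j =>
    ∑' (ε : En n) (k : {k : IVec n // dyadicCube n (j:ℤ) k ⊆ dyadicCube n j₀ k₀}),
      ENNReal.ofReal (‖a ε (j:ℤ) (k : IVec n)‖ ^ p) with hTdef
  set b : {j : ℤ // j₀ ≤ j} → ℝ≥0∞ := fun j =>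
    e2 ((((j:ℤ)):ℝ) * q * (γ₁ + n/2 - n/p)) * (T j) ^ (q/p) with hbdef
  set B : ℝ≥0∞ := ∑' j, b j with hBdef
  -- step 1: per-j estimate
  have h1 : ∀ j : {j : ℤ // j₀ ≤ j},
      e2 ((((j:ℤ)):ℝ) * (q/q₁) * ((γ₁ - w) + n/2 - n/(p/p₁))) *
        (∑' (ε : En n) (k : {k : IVec n // dyadicCube n (j:ℤ) k ⊆ dyadicCube n j₀ k₀}),
            ENNReal.ofReal (‖a ε (j:ℤ) (k : IVec n)‖ ^ (p/p₁))) ^ ((q/q₁)/(p/p₁))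
      ≤ e2 ((1-(j₀:ℝ)) * (q/q₁) * n * (p₁-1)/p) *
          (e2 (-(((j:ℤ)):ℝ)*(q/q₁)*w) * (b j) ^ (1/q₁)) := by
    intro j
    have := stepJ n p q γ₁ p₁ w q₁ hp0 hq0 hp₁ hq₁ a j₀ k₀ (j:ℤ) j.2
    calc _ ≤ _ := this
    _ = e2 ((1-(j₀:ℝ)) * (q/q₁) * n * (p₁-1)/p) *
          (e2 (-(((j:ℤ)):ℝ)*(q/q₁)*w) * (b j) ^ (1/q₁)) := by
        rw [hbdef]
        ring
  -- step 2: sum over j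
  have h2 : (∑' j : {j : ℤ // j₀ ≤ j},
      e2 ((((j:ℤ)):ℝ) * (q/q₁) * ((γ₁ - w) + n/2 - n/(p/p₁))) *
        (∑' (ε : En n) (k : {k : IVec n // dyadicCube n (j:ℤ) k ⊆ dyadicCube n j₀ k₀}),
            ENNReal.ofReal (‖a ε (j:ℤ) (k : IVec n)‖ ^ (p/p₁))) ^ ((q/q₁)/(p/p₁)))
      ≤ e2 ((1-(j₀:ℝ)) * (q/q₁) * n * (p₁-1)/p) *
          (G * (e2 (-(j₀:ℝ)*(q/q₁)*w) * B ^ (1/q₁))) := by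
    calc _ ≤ ∑' j : {j : ℤ // j₀ ≤ j}, e2 ((1-(j₀:ℝ)) * (q/q₁) * n * (p₁-1)/p) *
          (e2 (-(((j:ℤ)):ℝ)*(q/q₁)*w) * (b j) ^ (1/q₁)) := ENNReal.tsum_le_tsum h1
    _ = e2 ((1-(j₀:ℝ)) * (q/q₁) * n * (p₁-1)/p) *
          ∑' j : {j : ℤ // j₀ ≤ j}, e2 (-(((j:ℤ)):ℝ)*(q/q₁)*w) * (b j) ^ (1/q₁) :=
        ENNReal.tsum_mul_left
    _ ≤ _ := mul_le_mul_right (hG j₀ b) _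
  -- step 3: conclude
  have hQe0 : (0:ℝ) < q/q₁ := by positivity
  have h3 : e2 (-(j₀:ℝ) * (γ₂ - n/(p/p₁))) *
      ((∑' j : {j : ℤ // j₀ ≤ j},
        e2 ((((j:ℤ)):ℝ) * (q/q₁) * ((γ₁ - w) + n/2 - n/(p/p₁))) *
        (∑' (ε : En n) (k : {k : IVec n // dyadicCube n (j:ℤ) k ⊆ dyadicCube n j₀ k₀}),
            ENNReal.ofReal (‖a ε (j:ℤ) (k : IVec n)‖ ^ (p/p₁))) ^ ((q/q₁)/(p/p₁)))) ^ (1/(q/q₁))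
      ≤ (e2 ((n:ℝ)*(p₁-1)/p) * G ^ (q₁/q)) *
          (e2 (-(j₀:ℝ) * ((γ₂+w) - n/p)) * B ^ (1/q)) := by
    calc _ ≤ e2 (-(j₀:ℝ) * (γ₂ - n/(p/p₁))) *
          (e2 ((1-(j₀:ℝ)) * (q/q₁) * n * (p₁-1)/p) *
            (G * (e2 (-(j₀:ℝ)*(q/q₁)*w) * B ^ (1/q₁)))) ^ (1/(q/q₁)) :=
        mul_le_mul_right (ENNReal.rpow_le_rpow h2 (by positivity)) _
    _ = (e2 ((n:ℝ)*(p₁-1)/p) * G ^ (q₁/q)) *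
          (e2 (-(j₀:ℝ) * ((γ₂+w) - n/p)) * B ^ (1/q)) := by
        have h1q : 1/(q/q₁) = q₁/q := by rw [one_div_div]
        rw [h1q]
        rw [ENNReal.mul_rpow_of_nonneg _ _ (by positivity : (0:ℝ) ≤ q₁/q),
          ENNReal.mul_rpow_of_nonneg _ _ (by positivity : (0:ℝ) ≤ q₁/q),
          ENNReal.mul_rpow_of_nonneg _ _ (by positivity : (0:ℝ) ≤ q₁/q),
          e2_rpow, e2_rpow, ← ENNReal.rpow_mul]
        have hBexp : 1/q₁ * (q₁/q) = 1/q := by field_simp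
        rw [hBexp]
        have hexp : -(j₀:ℝ) * (γ₂ - n/(p/p₁)) + ((1-(j₀:ℝ)) * (q/q₁) * n * (p₁-1)/p * (q₁/q) +
            (-(j₀:ℝ)*(q/q₁)*w * (q₁/q))) = (n:ℝ)*(p₁-1)/p + (-(j₀:ℝ) * ((γ₂+w) - n/p)) := by
          field_simp
          ring
        calc e2 (-(j₀:ℝ) * (γ₂ - n/(p/p₁))) *
              (e2 ((1-(j₀:ℝ)) * (q/q₁) * n * (p₁-1)/p * (q₁/q)) *
                (G ^ (q₁/q) * (e2 (-(j₀:ℝ)*(q/q₁)*w * (q₁/q)) * B ^ (1/q))))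
            = e2 (-(j₀:ℝ) * (γ₂ - n/(p/p₁)) + ((1-(j₀:ℝ)) * (q/q₁) * n * (p₁-1)/p * (q₁/q) +
                (-(j₀:ℝ)*(q/q₁)*w * (q₁/q)))) * (G ^ (q₁/q) * B ^ (1/q)) := by
              rw [e2_add, e2_add]; ring
          _ = e2 ((n:ℝ)*(p₁-1)/p + (-(j₀:ℝ) * ((γ₂+w) - n/p))) * (G ^ (q₁/q) * B ^ (1/q)) := by
              rw [hexp]
          _ = (e2 ((n:ℝ)*(p₁-1)/p) * G ^ (q₁/q)) *
              (e2 (-(j₀:ℝ) * ((γ₂+w) - n/p)) * B ^ (1/q)) := by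
              rw [e2_add]; ring
  refine h3.trans (mul_le_mul_right ?_ _)
  exact le_iSup₂ (f := fun (j₀' : ℤ) (k₀' : IVec n) =>
    e2 (-(j₀':ℝ) * ((γ₂+w) - n/p)) *
      (∑' j : {j : ℤ // j₀' ≤ j},
        e2 ((((j:ℤ)):ℝ) * q * (γ₁ + n/2 - n/p)) *
          (∑' (ε : En n) (k : {k : IVec n // dyadicCube n (j:ℤ) k ⊆ dyadicCube n j₀' k₀'}),
              ENNReal.ofReal (‖a ε (j:ℤ) (k : IVec n)‖ ^ p)) ^ (q/p)) ^ (1/q)) j₀ k₀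

/-- the inclusion `Ḃ^{γ₁,γ₂+w}_{p,q} ⊆ Ḃ^{γ₁−w,γ₂}_{p/p₁,q/q₁}`
expressed on the wavelet-coefficient quantities `M`. -/
theorem statement16 (n : ℕ) (hn : 1 ≤ n) (p q γ₁ γ₂ p₁ w q₁ : ℝ)
    (hp1 : 1 < p) (hq1 : 1 < q) (hp₁ : 1 ≤ p₁) (hw : 0 ≤ w)
    (hcase : (w = 0 ∧ q₁ = 1) ∨ (0 < w ∧ 1 ≤ q₁ ∧ q₁ ≤ q)) :
    ∃ C : ℝ, 0 < C ∧ ∀ a : En n → ℤ → IVec n → ℂ,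
      besovM n (p / p₁) (q / q₁) (γ₁ - w) γ₂ a ≤
        ENNReal.ofReal C * besovM n p q γ₁ (γ₂ + w) a := by
  have hp0 : (0:ℝ) < p := lt_trans one_pos hp1
  have hq0 : (0:ℝ) < q := lt_trans one_pos hq1
  have hq₁1 : 1 ≤ q₁ := by
    rcases hcase with ⟨_, h⟩ | ⟨_, h, _⟩
    · rw [h]
    · exact h
  have hq₁q : q₁ ≤ q := by
    rcases hcase with ⟨_, h⟩ | ⟨_, _, h⟩
    · rw [h]; exact hq1.le
    · exact h
  have hq₁0 : (0:ℝ) < q₁ := lt_of_lt_of_le one_pos hq₁1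
  have hsplit : q₁ = 1 ∨ (1 < q₁ ∧ 0 < w) := by
    rcases hcase with ⟨_, h⟩ | ⟨hwpos, h, _⟩
    · exact Or.inl h
    · rcases eq_or_lt_of_le h with h' | h'
      · exact Or.inl h'.symm
      · exact Or.inr ⟨h', hwpos⟩
  obtain ⟨G, hG0, hGtop, hG⟩ : ∃ G : ℝ≥0∞, G ≠ 0 ∧ G ≠ ⊤ ∧
      (∀ (j₀ : ℤ) (b : {j : ℤ // j₀ ≤ j} → ℝ≥0∞),
        ∑' j : {j : ℤ // j₀ ≤ j}, e2 (-(((j:ℤ):ℝ))*(q/q₁)*w) * (b j) ^ (1/q₁)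
          ≤ G * (e2 (-(j₀:ℝ)*(q/q₁)*w) * (∑' j, b j) ^ (1/q₁))) := by
    rcases hsplit with h1 | ⟨hgt, hwpos⟩
    · refine ⟨1, one_ne_zero, ENNReal.one_ne_top, fun j₀ b => ?_⟩
      rw [h1, one_mul]
      simp only [div_one, one_div_one, ENNReal.rpow_one]
      calc ∑' j : {j : ℤ // j₀ ≤ j}, e2 (-(((j:ℤ):ℝ)) * q * w) * b j
          ≤ ∑' j : {j : ℤ // j₀ ≤ j}, e2 (-(j₀:ℝ) * q * w) * b j := by
            refine ENNReal.tsum_le_tsum fun j => mul_le_mul_left (e2_mono ?_) _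
            have hj : (j₀:ℝ) ≤ ((j:ℤ):ℝ) := by exact_mod_cast j.2
            nlinarith [mul_le_mul_of_nonneg_right hj (by positivity : (0:ℝ) ≤ q * w)]
        _ = e2 (-(j₀:ℝ) * q * w) * ∑' j, b j := ENNReal.tsum_mul_left
    · set s : ℝ := q₁ / (q₁ - 1) with hs
      have hs1 : 1 < s := by
        rw [hs, one_lt_div (by linarith)]
        linarith
      have hs0 : (0:ℝ) < s := lt_trans one_pos hs1
      have hconj : Real.HolderConjugate s q₁ := by
        rw [Real.holderConjugate_iff]
        refine ⟨hs1, ?_⟩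
        rw [hs]
        field_simp
        ring
      set c : ℝ := (q/q₁) * w * s with hc
      have hc0 : 0 < c := by positivity
      have hlt1 : e2 (-c) < 1 := e2_lt_one (by linarith)
      set G0 : ℝ≥0∞ := (1 - e2 (-c))⁻¹ with hG0def
      have hG00 : G0 ≠ 0 := by
        rw [hG0def, ENNReal.inv_ne_zero]
        exact (lt_of_le_of_lt tsub_le_self (by norm_num : (1:ℝ≥0∞) < ⊤)).ne
      have hG0top : G0 ≠ ⊤ := by
        rw [hG0def, ENNReal.inv_ne_top]
        exact (tsub_pos_of_lt hlt1).ne'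
      refine ⟨G0 ^ (1/s), ?_, ?_, ?_⟩
      · simp [ENNReal.rpow_eq_zero_iff, hG00, hG0top]
      · simp [ENNReal.rpow_eq_top_iff, hG00, hG0top]
      · intro j₀ b
        calc ∑' j : {j : ℤ // j₀ ≤ j}, e2 (-(((j:ℤ):ℝ))*(q/q₁)*w) * (b j) ^ (1/q₁)
            ≤ (∑' j : {j : ℤ // j₀ ≤ j}, (e2 (-(((j:ℤ):ℝ))*(q/q₁)*w)) ^ s) ^ (1/s) *
              (∑' j : {j : ℤ // j₀ ≤ j}, ((b j) ^ (1/q₁)) ^ q₁) ^ (1/q₁) :=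
              tsum_mul_le_Lp_mul_Lq_holder hconj _ _
          _ = (∑' j : {j : ℤ // j₀ ≤ j}, e2 (-(((j:ℤ):ℝ)) * c)) ^ (1/s) *
              (∑' j, b j) ^ (1/q₁) := by
              congr 2
              · refine tsum_congr fun j => ?_
                rw [e2_rpow]
                congr 1
                rw [hc]; ring
              · refine tsum_congr fun j => ?_
                rw [← ENNReal.rpow_mul, one_div, inv_mul_cancel₀ hq₁0.ne', ENNReal.rpow_one]
          _ = (e2 (-(j₀:ℝ) * c) * G0) ^ (1/s) * (∑' j, b j) ^ (1/q₁) := by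
              rw [tsum_e2_geo j₀ hc0, hG0def]
          _ = G0 ^ (1/s) * (e2 (-(j₀:ℝ)*(q/q₁)*w) * (∑' j, b j) ^ (1/q₁)) := by
              rw [ENNReal.mul_rpow_of_nonneg _ _ (by positivity : (0:ℝ) ≤ 1/s), e2_rpow]
              have : -(j₀:ℝ) * c * (1/s) = -(j₀:ℝ)*(q/q₁)*w := by
                rw [hc]; field_simp
              rw [this]; ring
  set K : ℝ≥0∞ := e2 ((n:ℝ)*(p₁-1)/p) * G ^ (q₁/q) with hK
  have hK0 : K ≠ 0 := by
    rw [hK]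
    simp [ENNReal.rpow_eq_zero_iff, e2_ne_zero, e2_ne_top, hG0, hGtop, mul_eq_zero]
  have hKtop : K ≠ ⊤ := by
    rw [hK]
    exact ENNReal.mul_ne_top (e2_ne_top _) (by simp [ENNReal.rpow_eq_top_iff, hG0, hGtop])
  refine ⟨K.toReal, ENNReal.toReal_pos hK0 hKtop, fun a => ?_⟩
  rw [ENNReal.ofReal_toReal hKtop]
  exact reduction n p q γ₁ γ₂ p₁ w q₁ hp0 hq0 hp₁ hq₁1 hw hq₁q G hG a
end
end
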